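/- arXiv:2507.08194 — 6 statements merged into one kernel-verified Lean document; each statement's English description precedes it below -/
import Mathlib

section
/- Let M = (E, I) be a matroid and for S ⊆ E let α(S) be the smallest integer ℓ such that a uniformly random ℓ-element subset of S is independent with probability at most 1/2. Then for any integer d > 1, a uniformly random subset of S of cardinality d·α(S) is dependent with probability at least 1 − 2^{−d}. -/
open Finset

section StmtAux
variable {α : Type*} [DecidableEq α]

private def cE (d a : ℕ) (V : Finset α) : ℕ :=
  ((Fintype.piFinset fun _ : Fin d => V.powersetCard a).filter
    fun f => Finset.univ.sup f = V).card

private lemma cE_le (d a : ℕ) {V W : Finset α} (h : V.card = W.card) :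
    cE d a V ≤ cE d a W := by
  classical
  set e := Finset.equivOfCardEq h with he
  set F : α → α := fun x => if hx : x ∈ V then (e ⟨x, hx⟩ : α) else x with hF
  set G : α → α := fun y => if hy : y ∈ W then (e.symm ⟨y, hy⟩ : α) else y with hG
  have hFW : ∀ x ∈ V, F x ∈ W := by
    intro x hx; simp only [hF, dif_pos hx]; exact (e ⟨x, hx⟩).2
  have hGF : ∀ x ∈ V, G (F x) = x := by
    intro x hx
    have h1 : F x = (e ⟨x, hx⟩ : α) := by simp [hF, dif_pos hx]
    have h2 : F x ∈ W := hFW x hx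
    simp only [hG, dif_pos h2]
    have : (⟨F x, h2⟩ : {y // y ∈ W}) = e ⟨x, hx⟩ := Subtype.ext h1
    rw [this, Equiv.symm_apply_apply]
  have hFinj : Set.InjOn F (V : Set α) := by
    intro x hx y hy hxy
    rw [← hGF x hx, ← hGF y hy, hxy]
  have himg : V.image F = W := by
    apply Finset.eq_of_subset_of_card_le
    · intro y hy; obtain ⟨x, hx, rfl⟩ := Finset.mem_image.mp hy; exact hFW x hx
    · rw [Finset.card_image_of_injOn hFinj, ← h]
  -- images of subsets of V
  have himGF : ∀ s : Finset α, s ⊆ V → (s.image F).image G = s := by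
    intro s hs
    rw [Finset.image_image]
    rw [show Finset.image (G ∘ F) s = Finset.image id s from
      Finset.image_congr (fun x hx => hGF x (hs hx))]
    exact Finset.image_id
  apply Finset.card_le_card_of_injOn (fun f => fun i => (f i).image F)
  · intro f hf
    rw [Finset.mem_coe, Finset.mem_filter] at hf ⊢
    obtain ⟨hf1, hf2⟩ := hf
    rw [Fintype.mem_piFinset] at hf1
    have hsub : ∀ i, f i ⊆ V := fun i => (Finset.mem_powersetCard.mp (hf1 i)).1
    constructor
    · rw [Fintype.mem_piFinset]
      intro i
      rw [Finset.mem_powersetCard]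
      constructor
      · intro y hy; obtain ⟨x, hx, rfl⟩ := Finset.mem_image.mp hy
        exact himg ▸ Finset.mem_image_of_mem F (hsub i hx)
      · rw [Finset.card_image_of_injOn (hFinj.mono (by exact_mod_cast hsub i))]
        exact (Finset.mem_powersetCard.mp (hf1 i)).2
    · rw [Finset.sup_eq_biUnion] at hf2 ⊢
      rw [show (Finset.univ.biUnion fun i => (f i).image F)
            = (Finset.univ.biUnion f).image F from ?_, hf2, himg]
      ext y
      simp only [Finset.mem_biUnion, Finset.mem_image]
      constructor
      · rintro ⟨i, _, x, hx, rfl⟩; exact ⟨x, ⟨i, Finset.mem_univ i, hx⟩, rfl⟩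
      · rintro ⟨x, ⟨i, _, hx⟩, rfl⟩; exact ⟨i, Finset.mem_univ i, x, hx, rfl⟩
  · intro f hf g hg hfg
    simp only [Finset.coe_filter, Set.mem_setOf_eq] at hf hg
    rw [Fintype.mem_piFinset] at *
    funext i
    have hfs : f i ⊆ V := (Finset.mem_powersetCard.mp (hf.1 i)).1
    have hgs : g i ⊆ V := (Finset.mem_powersetCard.mp (hg.1 i)).1
    have h2 : (f i).image F = (g i).image F := congrFun hfg i
    rw [← himGF (f i) hfs, ← himGF (g i) hgs, h2]

private lemma cE_congr (d a : ℕ) {V W : Finset α} (h : V.card = W.card) :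
    cE d a V = cE d a W :=
  le_antisymm (cE_le d a h) (cE_le d a h.symm)

private lemma grouping (d a : ℕ) (W : Finset α) (g : ℕ → ℝ) :
    ∑ f ∈ Fintype.piFinset (fun _ : Fin d => W.powersetCard a), g (Finset.univ.sup f).card
      = ∑ V ∈ W.powerset, (cE d a V : ℝ) * g V.card := by
  classical
  rw [← Finset.sum_fiberwise_of_maps_to (t := W.powerset) (g := fun f => Finset.univ.sup f)
    (fun f hf => by
      rw [Finset.mem_powerset]
      rw [Fintype.mem_piFinset] at hf
      exact Finset.sup_le fun i _ => (Finset.mem_powersetCard.mp (hf i)).1)]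
  apply Finset.sum_congr rfl
  intro V hV
  have hfix : ∀ f ∈ (Fintype.piFinset fun _ : Fin d => W.powersetCard a).filter
      (fun f => Finset.univ.sup f = V), g (Finset.univ.sup f).card = g V.card := by
    intro f hf
    rw [(Finset.mem_filter.mp hf).2]
  rw [Finset.sum_congr rfl hfix, Finset.sum_const, nsmul_eq_mul]
  congr 2
  simp only [cE]
  congr 1
  ext f
  simp only [Finset.mem_filter, Fintype.mem_piFinset, Finset.mem_powersetCard]
  constructor
  · rintro ⟨h1, rfl⟩
    exact ⟨fun i => ⟨Finset.le_sup (Finset.mem_univ i), (h1 i).2⟩, rfl⟩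
  · rintro ⟨h1, rfl⟩
    exact ⟨fun i => ⟨(h1 i).1.trans (Finset.mem_powerset.mp hV), (h1 i).2⟩, rfl⟩

private lemma cE_eq_zero (d a : ℕ) {V : Finset α} (h : d * a < V.card) :
    cE d a V = 0 := by
  rw [cE, Finset.card_eq_zero, Finset.filter_eq_empty_iff]
  intro f hf
  rw [Fintype.mem_piFinset] at hf
  intro hsup
  have : V.card ≤ d * a := by
    rw [← hsup, Finset.sup_eq_biUnion]
    calc (Finset.univ.biUnion f).card ≤ ∑ i : Fin d, (f i).card := Finset.card_biUnion_le
      _ = ∑ _i : Fin d, a := by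
          exact Finset.sum_congr rfl fun i _ => (Finset.mem_powersetCard.mp (hf i)).2
      _ = d * a := by simp [Finset.sum_const, mul_comm]
  omega

private lemma card_supersets (S U : Finset α) (hU : U ⊆ S) (k : ℕ) (hk : U.card ≤ k) :
    ((S.powersetCard k).filter fun t => U ⊆ t).card
      = (S.card - U.card).choose (k - U.card) := by
  rw [← Finset.card_sdiff_of_subset hU, ← Finset.card_powersetCard (k - U.card) (S \ U)]
  apply Finset.card_bij' (i := fun t _ => t \ U) (j := fun v _ => v ∪ U)
  · intro t ht
    rw [Finset.mem_filter, Finset.mem_powersetCard] at ht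
    rw [Finset.mem_powersetCard]
    exact ⟨Finset.sdiff_subset_sdiff ht.1.1 le_rfl,
      by rw [Finset.card_sdiff_of_subset ht.2, ht.1.2]⟩
  · intro v hv
    rw [Finset.mem_powersetCard] at hv
    have hdisj : Disjoint v U := Finset.disjoint_of_subset_left hv.1 Finset.sdiff_disjoint
    rw [Finset.mem_filter, Finset.mem_powersetCard]
    refine ⟨⟨Finset.union_subset (hv.1.trans Finset.sdiff_subset) hU, ?_⟩,
      Finset.subset_union_right⟩
    rw [Finset.card_union_of_disjoint hdisj, hv.2, Nat.sub_add_cancel hk]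
  · intro t ht
    rw [Finset.mem_filter] at ht
    exact Finset.sdiff_union_of_subset ht.2
  · intro v hv
    rw [Finset.mem_powersetCard] at hv
    exact Finset.union_sdiff_cancel_right
      (Finset.disjoint_of_subset_left hv.1 Finset.sdiff_disjoint)

private lemma sup_card_le (d a : ℕ) (W : Finset α) (f : Fin d → Finset α)
    (hf : f ∈ Fintype.piFinset (fun _ : Fin d => W.powersetCard a)) :
    (Finset.univ.sup f).card ≤ d * a := by
  rw [Fintype.mem_piFinset] at hf
  rw [Finset.sup_eq_biUnion]
  calc (Finset.univ.biUnion f).card ≤ ∑ i : Fin d, (f i).card := Finset.card_biUnion_le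
    _ = ∑ _i : Fin d, a :=
        Finset.sum_congr rfl fun i _ => (Finset.mem_powersetCard.mp (hf i)).2
    _ = d * a := by simp [Finset.sum_const, mul_comm]

private lemma swap_sum (d a : ℕ) (S t : Finset α) (htc : t.card = d * a) :
    ∑ V ∈ t.powerset, (cE d a V : ℝ) * ((S.card.choose V.card : ℝ) / ((d*a).choose V.card))
      = ∑ V' ∈ S.powerset, (cE d a V' : ℝ) := by
  classical
  have lhs_eq : ∀ V ∈ t.powerset,
      (cE d a V : ℝ) * ((S.card.choose V.card : ℝ) / ((d*a).choose V.card))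
        = ∑ V' ∈ S.powerset,
            (if V'.card = V.card then (cE d a V' : ℝ) / ((d*a).choose V.card) else 0) := by
    intro V _
    have : ∀ V' ∈ S.powerset,
        (if V'.card = V.card then (cE d a V' : ℝ) / ((d*a).choose V.card) else 0)
          = (if V'.card = V.card then (cE d a V : ℝ) / ((d*a).choose V.card) else 0) := by
      intro V' _
      split_ifs with h
      · rw [cE_congr d a h]
      · rfl
    rw [Finset.sum_congr rfl this, ← Finset.sum_filter, Finset.sum_const,
      ← Finset.powersetCard_eq_filter, Finset.card_powersetCard, nsmul_eq_mul]
    ring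
  rw [Finset.sum_congr rfl lhs_eq, Finset.sum_comm]
  apply Finset.sum_congr rfl
  intro V' _
  have : ∀ V ∈ t.powerset,
      (if V'.card = V.card then (cE d a V' : ℝ) / ((d*a).choose V.card) else 0)
        = (if V.card = V'.card then (cE d a V' : ℝ) / ((d*a).choose V'.card) else 0) := by
    intro V _
    by_cases h : V'.card = V.card
    · rw [if_pos h, if_pos h.symm, h]
    · rw [if_neg h, if_neg (fun hh => h hh.symm)]
  rw [Finset.sum_congr rfl this, ← Finset.sum_filter, Finset.sum_const,
    ← Finset.powersetCard_eq_filter, Finset.card_powersetCard, nsmul_eq_mul, htc]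
  by_cases hm : V'.card ≤ d * a
  · have hc : ((d*a).choose V'.card : ℝ) ≠ 0 := by
      exact_mod_cast (Nat.choose_pos hm).ne'
    field_simp
  · rw [cE_eq_zero d a (by omega)]
    simp

private lemma per_t (d a : ℕ) (S t : Finset α) (htS : t ⊆ S) (htc : t.card = d * a)
    (hn : d * a ≤ S.card) :
    ∑ f ∈ Fintype.piFinset (fun _ : Fin d => t.powersetCard a),
        ((1:ℝ) / ((S.card - (Finset.univ.sup f).card).choose (d*a - (Finset.univ.sup f).card)))
      = (S.card.choose a : ℝ)^d / (S.card.choose (d*a)) := by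
  classical
  set n := S.card with hn'
  have step1 : ∀ f ∈ Fintype.piFinset (fun _ : Fin d => t.powersetCard a),
      ((1:ℝ) / ((n - (Finset.univ.sup f).card).choose (d*a - (Finset.univ.sup f).card)))
        = (n.choose (Finset.univ.sup f).card : ℝ)
            / (((d*a).choose (Finset.univ.sup f).card : ℝ) * (n.choose (d*a))) := by
    intro f hf
    set m := (Finset.univ.sup f).card with hm
    have hmda : m ≤ d * a := htc ▸ sup_card_le d a t f hf
    have hkey : n.choose (d*a) * (d*a).choose m = n.choose m * (n-m).choose (d*a-m) :=
      Nat.choose_mul hmda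
    have h1 : (0:ℕ) < (n-m).choose (d*a-m) := Nat.choose_pos (by omega)
    have h2 : (0:ℕ) < (d*a).choose m := Nat.choose_pos hmda
    have h3 : (0:ℕ) < n.choose (d*a) := Nat.choose_pos hn
    rw [div_eq_div_iff (by exact_mod_cast h1.ne') (by positivity)]
    rw [one_mul, mul_comm]
    exact_mod_cast hkey
  rw [Finset.sum_congr rfl step1]
  rw [grouping d a t (fun m => (n.choose m : ℝ) / (((d*a).choose m : ℝ) * (n.choose (d*a))))]
  have step2 : ∀ V ∈ t.powerset,
      (cE d a V : ℝ) * ((n.choose V.card : ℝ) / (((d*a).choose V.card : ℝ) * (n.choose (d*a))))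
        = (cE d a V : ℝ) * ((n.choose V.card : ℝ) / ((d*a).choose V.card)) / (n.choose (d*a)) := by
    intro V _
    ring
  rw [Finset.sum_congr rfl step2, ← Finset.sum_div, swap_sum d a S t htc]
  congr 1
  have := grouping d a S (fun _ => (1:ℝ))
  simp only [mul_one] at this
  rw [← this, Finset.sum_const, Fintype.card_piFinset]
  simp [Finset.card_powersetCard, nsmul_eq_mul]
  rfl

end StmtAux

open Classical in
theorem stmt3 {α : Type*} [DecidableEq α] (M : Matroid α) (S : Finset α)
    (hSE : (↑S : Set α) ⊆ M.E) (a : ℕ)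
    (ha : 2 * ((S.powersetCard a).filter (fun T => M.Indep ↑T)).card ≤ (S.powersetCard a).card)
    (hmin : ∀ ℓ < a,
      2 * ((S.powersetCard ℓ).filter (fun T => M.Indep ↑T)).card > (S.powersetCard ℓ).card)
    (d : ℕ) (hd : 1 < d) :
    (1 - (1/2 : ℝ) ^ d) * (S.powersetCard (d * a)).card ≤
      ((S.powersetCard (d * a)).filter (fun T => ¬ M.Indep ↑T)).card := by
  classical
  simp only [Finset.bind_def, Finset.pure_def, Finset.sup_singleton_apply] at ha ⊢
  rw [Finset.filter_image] at ha; rw [@Finset.card_image_of_injective _ _ _ (fun a b => Classical.propDecidable (a = b)) _ Finset.coe_injective] at ha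
  rw [Finset.filter_image]; rw [@Finset.card_image_of_injective _ _ _ (fun a b => Classical.propDecidable (a = b)) _ Finset.coe_injective]
  set n := S.card with hn'
  by_cases hn : d * a ≤ n
  case neg =>
    have h0 : (S.powersetCard (d*a)).card = 0 := by
      rw [Finset.card_powersetCard]
      exact Nat.choose_eq_zero_of_lt (by omega)
    rw [h0]
    simp
  -- nontrivial case
  set P := S.powersetCard (d * a) with hP
  set piF := Fintype.piFinset (fun _ : Fin d => S.powersetCard a) with hpiF
  set w : (Fin d → Finset α) → ℝ := fun f =>
    (1:ℝ) / ((n - (Finset.univ.sup f).card).choose (d*a - (Finset.univ.sup f).card)) with hw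
  have hw_nonneg : ∀ f, 0 ≤ w f := fun f => by positivity
  set Ida := (P.filter (fun T : Finset α => M.Indep (↑T : Set α))).card with hIda
  set Ia := ((S.powersetCard a).filter (fun T : Finset α => M.Indep (↑T : Set α))).card with hIa
  -- the double sum A
  have A_eq : ∑ t ∈ P, ∑ f ∈ piF,
        (if M.Indep (↑t : Set α) ∧ Finset.univ.sup f ⊆ t then w f else 0)
      = (Ida : ℝ) * ((n.choose a : ℝ)^d / (n.choose (d*a))) := by
    have per : ∀ t ∈ P, ∑ f ∈ piF,
        (if M.Indep (↑t : Set α) ∧ Finset.univ.sup f ⊆ t then w f else 0)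
        = if M.Indep (↑t : Set α) then (n.choose a : ℝ)^d / (n.choose (d*a)) else 0 := by
      intro t ht
      rw [hP, Finset.mem_powersetCard] at ht
      by_cases hi : M.Indep (↑t : Set α)
      · rw [if_pos hi]
        have h1 : ∀ f ∈ piF,
            (if M.Indep (↑t : Set α) ∧ Finset.univ.sup f ⊆ t then w f else 0)
            = (if Finset.univ.sup f ⊆ t then w f else 0) := by
          intro f _; simp [hi]
        rw [Finset.sum_congr rfl h1, ← Finset.sum_filter]
        have hset : piF.filter (fun f => Finset.univ.sup f ⊆ t)
            = Fintype.piFinset (fun _ : Fin d => t.powersetCard a) := by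
          ext f
          simp only [Finset.mem_filter, Fintype.mem_piFinset, Finset.mem_powersetCard, hpiF]
          constructor
          · rintro ⟨h2, h3⟩
            exact fun i => ⟨(Finset.le_sup (Finset.mem_univ i)).trans h3, (h2 i).2⟩
          · intro h2
            refine ⟨fun i => ⟨(h2 i).1.trans ht.1, (h2 i).2⟩, ?_⟩
            exact Finset.sup_le fun i _ => (h2 i).1
        rw [hset]
        exact per_t d a S t ht.1 ht.2 hn
      · rw [if_neg hi]
        exact Finset.sum_eq_zero fun f _ => if_neg (fun h => hi h.1)
    rw [Finset.sum_congr rfl per, ← Finset.sum_filter, Finset.sum_const, nsmul_eq_mul, hIda]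
  -- the double sum B
  have B_eq : ∑ t ∈ P, ∑ f ∈ piF,
        (if (∀ i, M.Indep (↑(f i) : Set α)) ∧ Finset.univ.sup f ⊆ t then w f else 0)
      = (Ia : ℝ)^d := by
    rw [Finset.sum_comm]
    have per : ∀ f ∈ piF, ∑ t ∈ P,
        (if (∀ i, M.Indep (↑(f i) : Set α)) ∧ Finset.univ.sup f ⊆ t then w f else 0)
        = if (∀ i, M.Indep (↑(f i) : Set α)) then 1 else 0 := by
      intro f hf
      by_cases hind : ∀ i, M.Indep (↑(f i) : Set α)
      · rw [if_pos hind]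
        have h1 : ∀ t ∈ P,
            (if (∀ i, M.Indep (↑(f i) : Set α)) ∧ Finset.univ.sup f ⊆ t then w f else 0)
            = (if Finset.univ.sup f ⊆ t then w f else 0) := by
          intro t _; simp [hind]
        rw [Finset.sum_congr rfl h1, ← Finset.sum_filter, Finset.sum_const, nsmul_eq_mul]
        have hsub : Finset.univ.sup f ⊆ S :=
          Finset.sup_le fun i _ =>
            (Finset.mem_powersetCard.mp ((Fintype.mem_piFinset.mp hf) i)).1
        have hm : (Finset.univ.sup f).card ≤ d * a := sup_card_le d a S f hf
        rw [hP, card_supersets S (Finset.univ.sup f) hsub (d*a) hm]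
        have hpos : (0:ℕ) < (n - (Finset.univ.sup f).card).choose
            (d*a - (Finset.univ.sup f).card) := Nat.choose_pos (by omega)
        rw [hw]
        field_simp
        rfl
      · rw [if_neg hind]
        exact Finset.sum_eq_zero fun t _ => if_neg (fun h => hind h.1)
    rw [Finset.sum_congr rfl per, ← Finset.sum_filter, Finset.sum_const, nsmul_eq_mul, mul_one]
    have hset : piF.filter (fun f => ∀ i, M.Indep (↑(f i) : Set α))
        = Fintype.piFinset
            (fun _ : Fin d => (S.powersetCard a).filter (fun T : Finset α => M.Indep (↑T : Set α))) := by
      ext f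
      simp only [Finset.mem_filter, Fintype.mem_piFinset, hpiF]
      exact ⟨fun h i => ⟨h.1 i, h.2 i⟩, fun h => ⟨fun i => (h i).1, fun i => (h i).2⟩⟩
    rw [hset, Fintype.card_piFinset]
    simp [hIa]
  -- A ≤ B
  have A_le_B : ∑ t ∈ P, ∑ f ∈ piF,
        (if M.Indep (↑t : Set α) ∧ Finset.univ.sup f ⊆ t then w f else 0)
      ≤ ∑ t ∈ P, ∑ f ∈ piF,
        (if (∀ i, M.Indep (↑(f i) : Set α)) ∧ Finset.univ.sup f ⊆ t then w f else 0) := by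
    apply Finset.sum_le_sum
    intro t _
    apply Finset.sum_le_sum
    intro f _
    by_cases h : M.Indep (↑t : Set α) ∧ Finset.univ.sup f ⊆ t
    · have hall : ∀ i, M.Indep (↑(f i) : Set α) := by
        intro i
        apply h.1.subset
        exact Finset.coe_subset.mpr ((Finset.le_sup (Finset.mem_univ i)).trans h.2)
      rw [if_pos h, if_pos ⟨hall, h.2⟩]
    · rw [if_neg h]
      split_ifs with h2
      · exact hw_nonneg f
      · exact le_refl _
  -- combine
  have key : (Ida : ℝ) * ((n.choose a : ℝ)^d / (n.choose (d*a))) ≤ (Ia : ℝ)^d := by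
    rw [← A_eq, ← B_eq]; exact A_le_B
  have hCa : (0:ℝ) < (n.choose a : ℝ) := by
    exact_mod_cast Nat.choose_pos (le_trans (Nat.le_mul_of_pos_left a (by omega)) hn)
  have hCda : (0:ℝ) < (n.choose (d*a) : ℝ) := by exact_mod_cast Nat.choose_pos hn
  have hIa2 : (Ia : ℝ) ≤ (n.choose a : ℝ) / 2 := by
    have : (2 * Ia : ℝ) ≤ ((S.powersetCard a).card : ℝ) := by exact_mod_cast ha
    rw [Finset.card_powersetCard] at this
    linarith
  have hpow : (Ia : ℝ)^d ≤ ((n.choose a : ℝ) / 2)^d :=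
    pow_le_pow_left₀ (by positivity) hIa2 d
  have hkey2 : (Ida : ℝ) ≤ (1/2)^d * (n.choose (d*a) : ℝ) := by
    have h5 : (Ida : ℝ) * ((n.choose a : ℝ)^d / (n.choose (d*a)))
        ≤ ((n.choose a : ℝ))^d * (1/2)^d := by
      calc (Ida : ℝ) * ((n.choose a : ℝ)^d / (n.choose (d*a))) ≤ (Ia : ℝ)^d := key
        _ ≤ ((n.choose a : ℝ) / 2)^d := hpow
        _ = ((n.choose a : ℝ))^d * (1/2)^d := by rw [div_pow, ← mul_pow]; ring_nf; norm_num
    have hCad : (0:ℝ) < (n.choose a : ℝ)^d := by positivity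
    rw [← mul_div_assoc] at h5
    rw [div_le_iff₀ hCda] at h5
    nlinarith [h5, hCad, mul_pos hCad hCda]
  -- finish
  have hsplit : Ida + ((S.powersetCard (d*a)).filter (fun T : Finset α => ¬ M.Indep (↑T : Set α))).card
      = (S.powersetCard (d*a)).card := by
    rw [hIda, hP]
    exact Finset.card_filter_add_card_filter_not _
  have hNc : ((S.powersetCard (d*a)).card : ℝ) = (n.choose (d*a) : ℝ) := by
    rw [Finset.card_powersetCard]
  have hcast : (Ida : ℝ)
      + (((S.powersetCard (d*a)).filter (fun T : Finset α => ¬ M.Indep (↑T : Set α))).card : ℝ)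
      = ((S.powersetCard (d*a)).card : ℝ) := by exact_mod_cast hsplit
  have h2d : (0:ℝ) ≤ (1/2:ℝ)^d := by positivity
  show (1 - (1/2 : ℝ) ^ d) * ((S.powersetCard (d * a)).card : ℝ)
      ≤ (((S.powersetCard (d * a)).filter (fun T : Finset α => ¬ M.Indep (↑T : Set α))).card : ℝ)
  rw [hNc] at hcast ⊢
  linarith
end

section
/- Let M = (E, I) be a matroid and S ⊆ E with α(S) defined as the smallest ℓ such that a uniformly random ℓ-subset of S is independent with probability at most 1/2 (assume α(S) ≥ 2). Then a uniformly random subset of S of cardinality (α(S) − 1)/2 (rounded down) is independent with probability at least 1/√2. -/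
open Finset

private lemma pairCount_le {α : Type*} [DecidableEq α] (k : ℕ) {U V : Finset α}
    (h : U.card = V.card) :
    ((U.powersetCard k ×ˢ U.powersetCard k).filter (fun p => p.1 ∪ p.2 = U)).card ≤
    ((V.powersetCard k ×ˢ V.powersetCard k).filter (fun p => p.1 ∪ p.2 = V)).card := by
  let e := Finset.equivOfCardEq h
  set f : α → α := fun x => if hx : x ∈ U then (e ⟨x, hx⟩ : α) else x with hf
  have hfeq : ∀ (x : α) (hx : x ∈ U), f x = (e ⟨x, hx⟩ : α) := by
    intro x hx
    simp only [hf]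
    exact dif_pos hx
  have hfU : ∀ x ∈ U, f x ∈ V := by
    intro x hx
    rw [hfeq x hx]
    exact (e ⟨x, hx⟩).2
  have hinj : Set.InjOn f ↑U := by
    intro x hx y hy hxy
    rw [hfeq x hx, hfeq y hy] at hxy
    exact congrArg Subtype.val (e.injective (Subtype.coe_injective hxy))
  have himg : U.image f = V := by
    apply Finset.eq_of_subset_of_card_le
    · intro y hy
      obtain ⟨x, hx, rfl⟩ := Finset.mem_image.mp hy
      exact hfU x hx
    · rw [Finset.card_image_of_injOn hinj, h]
  have himg_eq : ∀ {A B : Finset α}, A ⊆ U → B ⊆ U → A.image f = B.image f → A = B := by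
    intro A B hA hB hAB
    apply Finset.Subset.antisymm <;> intro x hx
    · have : f x ∈ B.image f := hAB ▸ Finset.mem_image_of_mem f hx
      obtain ⟨y, hy, hyx⟩ := Finset.mem_image.mp this
      rwa [hinj (hB hy) (hA hx) hyx] at hy
    · have : f x ∈ A.image f := hAB ▸ Finset.mem_image_of_mem f hx
      obtain ⟨y, hy, hyx⟩ := Finset.mem_image.mp this
      rwa [hinj (hA hy) (hB hx) hyx] at hy
  apply Finset.card_le_card_of_injOn (fun p => (p.1.image f, p.2.image f))
  · intro p hp
    simp only [Finset.mem_coe, Finset.mem_filter, Finset.mem_product, Finset.mem_powersetCard] at hp ⊢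
    obtain ⟨⟨⟨h1U, h1k⟩, ⟨h2U, h2k⟩⟩, hu⟩ := hp
    refine ⟨⟨⟨?_, ?_⟩, ?_, ?_⟩, ?_⟩
    · intro y hy; obtain ⟨x, hx, rfl⟩ := Finset.mem_image.mp hy; exact hfU x (h1U hx)
    · rw [Finset.card_image_of_injOn (hinj.mono (by exact_mod_cast h1U)), h1k]
    · intro y hy; obtain ⟨x, hx, rfl⟩ := Finset.mem_image.mp hy; exact hfU x (h2U hx)
    · rw [Finset.card_image_of_injOn (hinj.mono (by exact_mod_cast h2U)), h2k]
    · rw [← Finset.image_union, hu, himg]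
  · intro p hp q hq hpq
    simp only [Finset.coe_filter, Set.mem_setOf_eq, Finset.mem_product,
      Finset.mem_powersetCard] at hp hq
    obtain ⟨⟨⟨h1U, _⟩, ⟨h2U, _⟩⟩, _⟩ := hp
    obtain ⟨⟨⟨g1U, _⟩, ⟨g2U, _⟩⟩, _⟩ := hq
    have h1 := congrArg Prod.fst hpq
    have h2 := congrArg Prod.snd hpq
    exact Prod.ext (himg_eq h1U g1U h1) (himg_eq h2U g2U h2)

-- If `a = α(S) ≥ 2` is the smallest `ℓ` such that a uniformly random `ℓ`-subset of `S` is
-- independent with probability at most `1/2`, then a uniformly random subset of `S` of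
-- cardinality `⌊(α(S)-1)/2⌋` is independent with probability at least `1/√2`.
open Classical in
theorem stmt4 {α : Type*} [DecidableEq α] (M : Matroid α) (S : Finset α)
    (hSE : (↑S : Set α) ⊆ M.E) (a : ℕ) (ha2 : 2 ≤ a)
    (ha : 2 * ((S.powersetCard a).filter (fun T => M.Indep ↑T)).card ≤ (S.powersetCard a).card)
    (hmin : ∀ ℓ < a,
      2 * ((S.powersetCard ℓ).filter (fun T => M.Indep ↑T)).card > (S.powersetCard ℓ).card) :
    ((S.powersetCard ((a - 1) / 2)).card : ℝ) / Real.sqrt 2 ≤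
      ((S.powersetCard ((a - 1) / 2)).filter (fun T => M.Indep ↑T)).card := by
  have hbind : ∀ (F : Finset (Finset α)),
      (Finset.filter (fun T => M.Indep T) (do let a ← F; pure ↑a : Finset (Set α))).card
      = (F.filter (fun T : Finset α => M.Indep (↑T : Set α))).card := by
    intro F
    have himg : ((do let a ← F; pure ↑a : Finset (Set α))) = F.image ((↑) : Finset α → Set α) := by
      simp [Bind.bind, Finset.biUnion_singleton]; rfl
    rw [himg, Finset.filter_image, Finset.card_image_of_injective _ Finset.coe_injective]
  rw [hbind]
  have hmin' : ∀ ℓ < a, 2 * ((S.powersetCard ℓ).filter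
      (fun T : Finset α => M.Indep (↑T : Set α))).card > (S.powersetCard ℓ).card := by
    intro ℓ hℓ
    have h := hmin ℓ hℓ
    rwa [hbind] at h
  clear hmin ha
  set k := (a - 1) / 2 with hk
  set N := ((S.powersetCard k).filter (fun T : Finset α => M.Indep (↑T : Set α))).card with hN
  set C := (S.powersetCard k).card with hC
  suffices hnat : C * C ≤ 2 * (N * N) by
    rw [div_le_iff₀ (Real.sqrt_pos.mpr (by norm_num : (0:ℝ) < 2))]
    have hr : (C:ℝ) * (C:ℝ) ≤ 2 * ((N:ℝ) * (N:ℝ)) := by exact_mod_cast hnat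
    have hsq : ((C : ℝ))^2 ≤ ((N : ℝ) * Real.sqrt 2)^2 := by
      rw [mul_pow, Real.sq_sqrt (by norm_num : (0:ℝ) ≤ 2)]
      nlinarith [hr]
    calc (C : ℝ) = Real.sqrt ((C:ℝ)^2) := (Real.sqrt_sq (by positivity)).symm
      _ ≤ Real.sqrt (((N:ℝ) * Real.sqrt 2)^2) := Real.sqrt_le_sqrt hsq
      _ = (N:ℝ) * Real.sqrt 2 := Real.sqrt_sq (by positivity)
  -- combinatorial part
  have h2k : 2 * k ≤ a - 1 := by omega
  have hlta : ∀ m, m ≤ 2 * k → m < a := by intro m hm; omega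
  set pairs := (S.powersetCard k) ×ˢ (S.powersetCard k) with hpairs
  set good := pairs.filter
    (fun p : Finset α × Finset α => M.Indep ((↑(p.1 ∪ p.2)) : Set α)) with hgood
  set fc : Finset α → ℕ := fun U => (pairs.filter (fun p => p.1 ∪ p.2 = U)).card with hfc
  have hmem : ∀ p ∈ pairs, p.1 ∪ p.2 ∈ S.powerset := by
    intro p hp
    rw [hpairs, Finset.mem_product] at hp
    rw [Finset.mem_powerset]
    exact Finset.union_subset (Finset.mem_powersetCard.mp hp.1).1
      (Finset.mem_powersetCard.mp hp.2).1
  have hcard1 : pairs.card = ∑ U ∈ S.powerset, fc U :=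
    Finset.card_eq_sum_card_fiberwise hmem
  have hcard2 : good.card =
      ∑ U ∈ S.powerset.filter (fun U : Finset α => M.Indep (↑U : Set α)), fc U := by
    have h := Finset.card_eq_sum_card_fiberwise
      (f := fun p : Finset α × Finset α => p.1 ∪ p.2) (s := good)
      (t := S.powerset.filter (fun U : Finset α => M.Indep (↑U : Set α))) (by
        intro p hp
        simp only [hgood, Finset.mem_coe, Finset.mem_filter] at hp
        exact Finset.mem_filter.mpr ⟨hmem p hp.1, hp.2⟩)
    rw [h]
    apply Finset.sum_congr rfl
    intro U hU
    have hUind : M.Indep (↑U : Set α) := (Finset.mem_filter.mp hU).2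
    simp only [hfc]
    congr 1
    rw [hgood, Finset.filter_filter]
    apply Finset.filter_congr
    intro p _
    constructor
    · exact fun h => h.2
    · exact fun h => ⟨by rw [h]; exact hUind, h⟩
  -- fc is constant on each powersetCard class
  have hfc_local : ∀ U ∈ S.powerset, fc U =
      ((U.powersetCard k ×ˢ U.powersetCard k).filter (fun p => p.1 ∪ p.2 = U)).card := by
    intro U hU
    rw [Finset.mem_powerset] at hU
    simp only [hfc]
    congr 1
    ext p
    simp only [hpairs, Finset.mem_filter, Finset.mem_product, Finset.mem_powersetCard]
    constructor
    · rintro ⟨⟨⟨h1, h1k⟩, h2, h2k⟩, hu⟩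
      exact ⟨⟨⟨hu ▸ Finset.subset_union_left, h1k⟩, hu ▸ Finset.subset_union_right, h2k⟩, hu⟩
    · rintro ⟨⟨⟨h1, h1k⟩, h2, h2k⟩, hu⟩
      exact ⟨⟨⟨h1.trans hU, h1k⟩, h2.trans hU, h2k⟩, hu⟩
  have hfc_const : ∀ m : ℕ, ∀ U ∈ S.powersetCard m, ∀ V ∈ S.powersetCard m, fc U = fc V := by
    intro m U hU V hV
    rw [Finset.mem_powersetCard] at hU hV
    rw [hfc_local U (Finset.mem_powerset.mpr hU.1), hfc_local V (Finset.mem_powerset.mpr hV.1)]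
    exact le_antisymm (pairCount_le k (hU.2.trans hV.2.symm))
      (pairCount_le k (hV.2.trans hU.2.symm))
  have hfc_zero : ∀ m : ℕ, 2 * k < m → ∀ U ∈ S.powersetCard m, fc U = 0 := by
    intro m hm U hU
    rw [Finset.mem_powersetCard] at hU
    simp only [hfc]
    rw [Finset.card_eq_zero, Finset.filter_eq_empty_iff]
    intro p hp
    rw [hpairs, Finset.mem_product] at hp
    intro hcon
    have h1 := (Finset.mem_powersetCard.mp hp.1).2
    have h2 := (Finset.mem_powersetCard.mp hp.2).2
    have h3 := Finset.card_union_le p.1 p.2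
    rw [hcon, hU.2, h1, h2] at h3
    omega
  -- main counting inequality
  have hmain : pairs.card ≤ 2 * good.card := by
    rw [hcard1, hcard2, Finset.sum_filter, Finset.sum_powerset, Finset.sum_powerset,
      Finset.mul_sum]
    apply Finset.sum_le_sum
    intro m _
    by_cases hm : m ≤ 2 * k
    · rcases (S.powersetCard m).eq_empty_or_nonempty with he | ⟨U₀, hU₀⟩
      · simp [he]
      · have hsum1 : ∑ U ∈ S.powersetCard m, fc U = (S.powersetCard m).card * fc U₀ := by
          rw [Finset.sum_congr rfl (fun U hU => hfc_const m U hU U₀ hU₀), Finset.sum_const,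
            smul_eq_mul]
        have hsum2 : ∑ U ∈ S.powersetCard m,
            (if M.Indep (↑U : Set α) then fc U else 0) =
            ((S.powersetCard m).filter (fun U : Finset α => M.Indep (↑U : Set α))).card
              * fc U₀ := by
          rw [← Finset.sum_filter]
          rw [Finset.sum_congr rfl (fun U hU => hfc_const m U (Finset.mem_of_mem_filter U hU)
            U₀ hU₀), Finset.sum_const, smul_eq_mul]
        rw [hsum1, hsum2, ← mul_assoc]
        exact Nat.mul_le_mul_right _ (le_of_lt (hmin' m (hlta m hm)))
    · rw [Finset.sum_eq_zero (hfc_zero m (by omega))]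
      exact Nat.zero_le _
  -- good pairs consist of two independent sets
  have hgoodle : good.card ≤ N * N := by
    have hsub : good ⊆ ((S.powersetCard k).filter (fun T : Finset α => M.Indep (↑T : Set α)))
        ×ˢ ((S.powersetCard k).filter (fun T : Finset α => M.Indep (↑T : Set α))) := by
      intro p hp
      rw [hgood, Finset.mem_filter, hpairs, Finset.mem_product] at hp
      rw [Finset.mem_product, Finset.mem_filter, Finset.mem_filter]
      refine ⟨⟨hp.1.1, hp.2.subset ?_⟩, hp.1.2, hp.2.subset ?_⟩
      · rw [Finset.coe_union]; exact Set.subset_union_left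
      · rw [Finset.coe_union]; exact Set.subset_union_right
    calc good.card ≤ _ := Finset.card_le_card hsub
      _ = N * N := Finset.card_product _ _
  calc C * C = pairs.card := (Finset.card_product _ _).symm
    _ ≤ 2 * good.card := hmain
    _ ≤ 2 * (N * N) := Nat.mul_le_mul_left 2 hgoodle
end

section
/- Let M = (E, I) be a matroid of rank r with n = |E| and let d be a positive integer. Then there exists a set T ⊆ E with |T| ≤ r·d such that the restriction of M to E \ T is either empty or satisfies: for every subset S ⊆ E \ T with rank(S) < rank(E \ T), we have (|E \ T| − |S|) / (rank(E \ T) − rank(S)) ≥ d. -/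
/-- The rank of a set in a matroid: the maximum cardinality of an independent subset. -/
noncomputable def mrank {α : Type*} (M : Matroid α) (S : Set α) : ℕ :=
  sSup {n | ∃ I : Set α, M.Indep I ∧ I ⊆ S ∧ I.ncard = n}

lemma mrank_mono {α : Type*} [Fintype α] (M : Matroid α) {A B : Set α} (h : A ⊆ B) :
    mrank M A ≤ mrank M B := by
  apply csSup_le_csSup
  · exact ⟨B.ncard, by rintro n ⟨I, hI, hIS, rfl⟩; exact Set.ncard_le_ncard hIS B.toFinite⟩
  · exact ⟨0, ∅, M.empty_indep, Set.empty_subset _, by simp⟩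
  · rintro n ⟨I, hI, hIS, rfl⟩; exact ⟨I, hI, hIS.trans h, rfl⟩

lemma key_lemma {α : Type*} [Fintype α] (M : Matroid α) (d : ℕ) (hd : 0 < d) :
    ∀ n (F : Set α), F.ncard ≤ n → F ⊆ M.E →
    ∃ T ⊆ F, T.ncard ≤ mrank M F * d ∧
      (F \ T = ∅ ∨
        ∀ S ⊆ F \ T, mrank M S < mrank M (F \ T) →
          (d : ℝ) ≤ (((F \ T).ncard : ℝ) - (S.ncard : ℝ)) /
            ((mrank M (F \ T) : ℝ) - (mrank M S : ℝ))) := by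
  intro n
  induction n with
  | zero =>
    intro F hF _
    have : F = ∅ := (Set.ncard_eq_zero F.toFinite).mp (Nat.le_zero.mp hF)
    exact ⟨∅, by simp, by simp, Or.inl (by simp [this])⟩
  | succ n ih =>
    intro F hF hFE
    by_cases h : ∀ S ⊆ F, mrank M S < mrank M F →
        (d : ℝ) ≤ ((F.ncard : ℝ) - (S.ncard : ℝ)) / ((mrank M F : ℝ) - (mrank M S : ℝ))
    · refine ⟨∅, by simp, by simp, Or.inr ?_⟩
      simpa using h
    · push_neg at h
      obtain ⟨S, hS, hrlt, hlt⟩ := h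
      have hSne : S ≠ F := by rintro rfl; exact absurd hrlt (lt_irrefl _)
      have hcard : S.ncard < F.ncard :=
        Set.ncard_lt_ncard (HasSubset.Subset.ssubset_of_ne hS hSne) F.toFinite
      have hpos : (0 : ℝ) < (mrank M F : ℝ) - (mrank M S : ℝ) := by
        have : (mrank M S : ℝ) < (mrank M F : ℝ) := by exact_mod_cast hrlt
        linarith
      have hreal : ((F.ncard : ℝ) - S.ncard) < d * ((mrank M F : ℝ) - mrank M S) :=
        (div_lt_iff₀ hpos).mp hlt
      have hnat : F.ncard - S.ncard < d * (mrank M F - mrank M S) := by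
        rw [← Nat.cast_sub hcard.le, ← Nat.cast_sub hrlt.le] at hreal
        exact_mod_cast hreal
      obtain ⟨T', hT'S, hT'card, hgood⟩ := ih S (by omega) (hS.trans hFE)
      refine ⟨(F \ S) ∪ T', ?_, ?_, ?_⟩
      · exact Set.union_subset Set.diff_subset (hT'S.trans hS)
      · have hdisj : Disjoint (F \ S) T' :=
          Set.disjoint_of_subset_right hT'S Set.disjoint_sdiff_left
        rw [Set.ncard_union_eq hdisj (F \ S).toFinite T'.toFinite,
          Set.ncard_diff hS S.toFinite]
        have hmul : d * (mrank M F - mrank M S) + d * mrank M S = d * mrank M F := by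
          rw [← Nat.mul_add]
          congr 1
          omega
        have hmono : mrank M S ≤ mrank M F := mrank_mono M hS
        have h1 : mrank M S * d = d * mrank M S := Nat.mul_comm _ _
        have h2 : mrank M F * d = d * mrank M F := Nat.mul_comm _ _
        omega
      · have heq : F \ ((F \ S) ∪ T') = S \ T' := by
          ext x
          constructor
          · rintro ⟨hxF, hx⟩
            simp only [Set.mem_union, Set.mem_diff, not_or, not_and, not_not] at hx
            exact ⟨hx.1 hxF, hx.2⟩
          · rintro ⟨hxS, hx⟩
            refine ⟨hS hxS, ?_⟩
            simp only [Set.mem_union, Set.mem_diff, not_or, not_and, not_not]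
            exact ⟨fun _ => hxS, hx⟩
        rw [heq]
        exact hgood

-- For any matroid of rank `r` and any positive integer `d`, there is `T ⊆ E` with
-- `|T| ≤ r·d` such that the restriction to `E \ T` is empty or satisfies
-- `(|E \ T| - |S|)/(rank(E \ T) - rank(S)) ≥ d` for all `S ⊆ E \ T` of smaller rank.
theorem stmt7 {α : Type*} [Fintype α] (M : Matroid α) (d : ℕ) (hd : 0 < d) :
    ∃ T ⊆ M.E, T.ncard ≤ mrank M M.E * d ∧
      (M.E \ T = ∅ ∨
        ∀ S ⊆ M.E \ T, mrank M S < mrank M (M.E \ T) →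
          (d : ℝ) ≤ (((M.E \ T).ncard : ℝ) - (S.ncard : ℝ)) /
            ((mrank M (M.E \ T) : ℝ) - (mrank M S : ℝ))) := by
  exact key_lemma M d hd M.E.ncard M.E le_rfl (subset_refl _)
end

section
/- Let X ~ Bin(n, p) with p ≤ 1/2 and Var[X] = np(1−p) ≥ 1. Then Pr[X ≥ E[X] + (1/5)·√(Var[X])] ≥ 1/108 and Pr[X ≤ E[X] − (1/5)·√(Var[X])] ≥ 1/108. -/
open Finset

private lemma bin_sum (n : ℕ) {p q : ℝ} (h : p + q = 1) :
    ∑ i ∈ range (n+1), (n.choose i : ℝ) * p ^ i * q ^ (n - i) = 1 := by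
  have h2 := add_pow p q n
  rw [h, one_pow] at h2
  rw [h2]
  exact sum_congr rfl fun i _ => by ring

private lemma bin_absorb (m : ℕ) (p q : ℝ) (f : ℕ → ℝ) :
    ∑ i ∈ range (m+2), (((m+1).choose i : ℕ) : ℝ) * p ^ i * q ^ (m+1-i) * ((i : ℝ) * f i)
      = ((m:ℝ)+1) * p * ∑ j ∈ range (m+1), (m.choose j : ℝ) * p ^ j * q ^ (m-j) * f (j+1) := by
  rw [Finset.sum_range_succ']
  simp only [Nat.cast_zero, zero_mul, mul_zero, add_zero]
  rw [Finset.mul_sum]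
  refine sum_congr rfl fun j hj => ?_
  have h1 : (((m+1).choose (j+1) : ℕ) : ℝ) * ((j:ℝ)+1) = ((m:ℝ)+1) * (m.choose j) := by
    have h := Nat.add_one_mul_choose_eq m j
    have h' := congrArg (Nat.cast (R := ℝ)) h
    push_cast at h'
    linarith
  have h2 : m + 1 - (j+1) = m - j := by omega
  rw [h2]
  push_cast
  linear_combination h1 * (p ^ j * p * q ^ (m - j) * f (j+1))

private lemma bin_m1 (n : ℕ) {p q : ℝ} (h : p + q = 1) :
    ∑ i ∈ range (n+1), (n.choose i : ℝ) * p ^ i * q ^ (n-i) * ((i:ℝ)) = n * p := by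
  cases n with
  | zero => simp
  | succ m =>
    have h2 := bin_absorb m p q (fun _ => 1)
    simp only [mul_one] at h2
    rw [h2, bin_sum m h]
    push_cast
    ring

private lemma bin_m2 (n : ℕ) {p q : ℝ} (h : p + q = 1) :
    ∑ i ∈ range (n+1), (n.choose i : ℝ) * p ^ i * q ^ (n-i) * ((i:ℝ) * ((i:ℝ)-1))
      = (n:ℝ) * ((n:ℝ)-1) * p^2 := by
  cases n with
  | zero => simp
  | succ m =>
    have h2 := bin_absorb m p q (fun i => (i:ℝ) - 1)
    rw [h2]
    have h4 : ∑ j ∈ range (m+1), (m.choose j : ℝ) * p ^ j * q ^ (m-j) * ((((j+1:ℕ)):ℝ) - 1)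
        = ∑ j ∈ range (m+1), (m.choose j : ℝ) * p ^ j * q ^ (m-j) * ((j:ℝ)) :=
      sum_congr rfl fun j _ => by push_cast; ring
    rw [h4, bin_m1 m h]
    push_cast
    ring

private lemma bin_m3 (n : ℕ) {p q : ℝ} (h : p + q = 1) :
    ∑ i ∈ range (n+1), (n.choose i : ℝ) * p ^ i * q ^ (n-i) * ((i:ℝ) * (((i:ℝ)-1) * ((i:ℝ)-2)))
      = (n:ℝ) * ((n:ℝ)-1) * ((n:ℝ)-2) * p^3 := by
  cases n with
  | zero => simp
  | succ m =>
    have h2 := bin_absorb m p q (fun i => ((i:ℝ)-1) * ((i:ℝ)-2))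
    rw [h2]
    have h4 : ∑ j ∈ range (m+1), (m.choose j : ℝ) * p ^ j * q ^ (m-j) * (((((j+1:ℕ)):ℝ) - 1) * ((((j+1:ℕ)):ℝ) - 2))
        = ∑ j ∈ range (m+1), (m.choose j : ℝ) * p ^ j * q ^ (m-j) * ((j:ℝ) * ((j:ℝ)-1)) :=
      sum_congr rfl fun j _ => by push_cast; ring
    rw [h4, bin_m2 m h]
    push_cast
    ring

private lemma bin_m4 (n : ℕ) {p q : ℝ} (h : p + q = 1) :
    ∑ i ∈ range (n+1), (n.choose i : ℝ) * p ^ i * q ^ (n-i) * ((i:ℝ) * (((i:ℝ)-1) * (((i:ℝ)-2) * ((i:ℝ)-3))))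
      = (n:ℝ) * ((n:ℝ)-1) * ((n:ℝ)-2) * ((n:ℝ)-3) * p^4 := by
  cases n with
  | zero => simp
  | succ m =>
    have h2 := bin_absorb m p q (fun i => ((i:ℝ)-1) * (((i:ℝ)-2) * ((i:ℝ)-3)))
    rw [h2]
    have h4 : ∑ j ∈ range (m+1), (m.choose j : ℝ) * p ^ j * q ^ (m-j) * (((((j+1:ℕ)):ℝ) - 1) * (((((j+1:ℕ)):ℝ) - 2) * ((((j+1:ℕ)):ℝ) - 3)))
        = ∑ j ∈ range (m+1), (m.choose j : ℝ) * p ^ j * q ^ (m-j) * ((j:ℝ) * (((j:ℝ)-1) * ((j:ℝ)-2))) :=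
      sum_congr rfl fun j _ => by push_cast; ring
    rw [h4, bin_m3 m h]
    push_cast
    ring

private lemma cube_bound {P : ℝ} (hP3 : 1/640000 ≤ P^3) : 1/108 ≤ P := by
  nlinarith [sq_nonneg (P - 1/108), sq_nonneg (P + 1/108), sq_nonneg P]

set_option maxHeartbeats 1000000 in
private lemma tail_lemma {ι : Type*} [DecidableEq ι] (s : Finset ι) (w v : ι → ℝ)
    (hw : ∀ i ∈ s, 0 ≤ w i) (h0 : ∑ i ∈ s, w i = 1)
    (h1 : ∑ i ∈ s, w i * v i = 0)
    {V : ℝ} (hV : 1 ≤ V) (h2 : ∑ i ∈ s, w i * (v i)^2 = V)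
    (h4 : ∑ i ∈ s, w i * (v i)^4 ≤ 4 * V^2) :
    1/108 ≤ ∑ i ∈ s, (if Real.sqrt V / 5 ≤ v i then w i else 0) := by
  classical
  set σ := Real.sqrt V with hσdef
  have hV0 : (0:ℝ) ≤ V := by linarith
  have hσsq : σ^2 = V := Real.sq_sqrt hV0
  have hσ0 : 0 ≤ σ := Real.sqrt_nonneg V
  have hσ1 : 1 ≤ σ := by nlinarith
  set m1 := ∑ i ∈ s, w i * |v i| with hm1def
  set m3 := ∑ i ∈ s, w i * |v i|^3 with hm3def
  have hm10 : 0 ≤ m1 := sum_nonneg fun i hi => mul_nonneg (hw i hi) (abs_nonneg _)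
  have hm30 : 0 ≤ m3 := sum_nonneg fun i hi => mul_nonneg (hw i hi) (by positivity)
  have CS1 : V^2 ≤ m1 * m3 := by
    have h := sum_sq_le_sum_mul_sum_of_sq_eq_mul s
      (r := fun i => w i * (v i)^2) (f := fun i => w i * |v i|) (g := fun i => w i * |v i|^3)
      (fun i hi => mul_nonneg (hw i hi) (abs_nonneg _))
      (fun i hi => mul_nonneg (hw i hi) (by positivity))
      (fun i hi => by
        have hv4 : |v i|^4 = (v i)^4 := by rw [← abs_pow, abs_of_nonneg (by positivity)]
        linear_combination (-(w i)^2) * hv4)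
    rw [h2] at h
    exact h
  have CS2 : m3^2 ≤ 4 * V^3 := by
    have h := sum_sq_le_sum_mul_sum_of_sq_eq_mul s
      (r := fun i => w i * |v i|^3) (f := fun i => w i * (v i)^2) (g := fun i => w i * (v i)^4)
      (fun i hi => mul_nonneg (hw i hi) (by positivity))
      (fun i hi => mul_nonneg (hw i hi) (by positivity))
      (fun i hi => by
        have hv6 : (|v i|^3)^2 = (v i)^6 := by rw [← abs_pow, sq_abs]; ring
        linear_combination (w i)^2 * hv6)
    rw [h2] at h
    nlinarith
  have hEq : 4 * V^3 = (2*σ*V)^2 := by linear_combination (-4*V^2) * hσsq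
  have hm3le : m3 ≤ 2 * σ * V := by
    rw [hEq] at CS2
    have hb : 0 ≤ 2*σ*V := by positivity
    nlinarith [CS2, hm30, hb]
  have hm1ge : σ/2 ≤ m1 := by
    have hmm : m1 * m3 ≤ m1 * (2*σ*V) := mul_le_mul_of_nonneg_left hm3le hm10
    rw [← hσsq] at CS1 hmm
    have hσ3 : (0:ℝ) < σ^3 := by positivity
    nlinarith [CS1, hmm, hσ3]
  have hhalf : ∑ i ∈ s, w i * max (v i) 0 = m1 / 2 := by
    have e : ∀ i ∈ s, w i * max (v i) 0 = (w i * v i + w i * |v i|) / 2 := fun i _ => by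
      rcases le_or_gt 0 (v i) with h | h
      · rw [max_eq_left h, abs_of_nonneg h]; ring
      · rw [max_eq_right h.le, abs_of_neg h]; ring
    rw [sum_congr rfl e, ← Finset.sum_div, Finset.sum_add_distrib, h1, hm1def]
    ring
  set t := σ/5 with htdef
  have ht0 : 0 ≤ t := by positivity
  set S := ∑ i ∈ s, (if t ≤ v i then w i * v i else 0) with hSdef
  have hstep : m1/2 ≤ t + S := by
    have hle : ∑ i ∈ s, w i * max (v i) 0 ≤ ∑ i ∈ s, (t * w i + (if t ≤ v i then w i * v i else 0)) := by
      refine Finset.sum_le_sum fun i hi => ?_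
      split_ifs with h
      · have hv0 : 0 ≤ v i := le_trans ht0 h
        rw [max_eq_left hv0]
        nlinarith [hw i hi]
      · push_neg at h
        have hm : max (v i) 0 ≤ t := max_le h.le ht0
        have := mul_le_mul_of_nonneg_left hm (hw i hi)
        linarith
    rw [hhalf] at hle
    rw [Finset.sum_add_distrib, ← Finset.mul_sum, h0, mul_one] at hle
    linarith
  have hSge : σ/20 ≤ S := by
    have h := le_trans (show σ/4 ≤ m1/2 by linarith) hstep
    rw [htdef] at h; linarith
  set P := ∑ i ∈ s, (if t ≤ v i then w i else 0) with hPdef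
  set Q := ∑ i ∈ s, (if t ≤ v i then w i * (v i)^2 else 0) with hQdef
  have hP0 : 0 ≤ P := sum_nonneg fun i hi => by split_ifs; exacts [hw i hi, le_refl 0]
  have hQ0 : 0 ≤ Q := sum_nonneg fun i hi => by
    split_ifs; exacts [mul_nonneg (hw i hi) (sq_nonneg _), le_refl 0]
  have CS3 : S^2 ≤ P * Q := by
    refine sum_sq_le_sum_mul_sum_of_sq_eq_mul s
      (r := fun i => if t ≤ v i then w i * v i else 0)
      (f := fun i => if t ≤ v i then w i else 0)
      (g := fun i => if t ≤ v i then w i * (v i)^2 else 0)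
      (fun i hi => ?_) (fun i hi => ?_) (fun i hi => ?_) <;> split_ifs
    exacts [hw i hi, le_refl 0, mul_nonneg (hw i hi) (sq_nonneg _), le_refl 0,
      by ring, by ring]
  have CS4 : Q^2 ≤ P * (4 * V^2) := by
    have h := sum_sq_le_sum_mul_sum_of_sq_eq_mul s
      (r := fun i => if t ≤ v i then w i * (v i)^2 else 0)
      (f := fun i => if t ≤ v i then w i else 0)
      (g := fun i => if t ≤ v i then w i * (v i)^4 else 0)
      (fun i hi => by split_ifs; exacts [hw i hi, le_refl 0])
      (fun i hi => by split_ifs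
                      exacts [mul_nonneg (hw i hi) (by positivity), le_refl 0])
      (fun i hi => by split_ifs <;> ring)
    have hle : ∑ i ∈ s, (if t ≤ v i then w i * (v i)^4 else 0) ≤ 4 * V^2 := by
      refine le_trans (Finset.sum_le_sum (fun i hi => ?_)) h4
      split_ifs
      · exact le_refl _
      · exact mul_nonneg (hw i hi) (by positivity)
    nlinarith [h, hP0, hle]
  have hS0 : 0 ≤ S := le_trans (by positivity) hSge
  have hA : S^4 ≤ (P*Q)^2 := by nlinarith [CS3, sq_nonneg S, mul_nonneg hP0 hQ0]
  have hB : (P*Q)^2 ≤ 4 * P^3 * V^2 := by nlinarith [CS4, sq_nonneg P]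
  have hlow : (σ/20)^4 ≤ S^4 := pow_le_pow_left₀ (by positivity) hSge 4
  have hσ4 : σ^4 = V^2 := by rw [show σ^4 = (σ^2)^2 by ring, hσsq]
  have key : V^2 / 160000 ≤ 4 * P^3 * V^2 := by nlinarith [hlow, hA, hB, hσ4]
  have hV2 : 1 ≤ V^2 := by nlinarith
  have hP3 : 1/640000 ≤ P^3 := by nlinarith [key, hV2]
  exact cube_bound hP3
private lemma bin_cm1 (n : ℕ) (p : ℝ) :
    ∑ i ∈ range (n+1), (n.choose i : ℝ) * p ^ i * (1-p) ^ (n-i) * ((i:ℝ) - (n:ℝ)*p) = 0 := by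
  have hq : p + (1-p) = 1 := by ring
  have e : ∀ i ∈ range (n+1), (n.choose i : ℝ) * p ^ i * (1-p) ^ (n-i) * ((i:ℝ) - (n:ℝ)*p)
      = ((n.choose i : ℝ) * p ^ i * (1-p) ^ (n-i) * ((i:ℝ)))
        - ((n:ℝ)*p) * ((n.choose i : ℝ) * p ^ i * (1-p) ^ (n-i)) := fun i _ => by ring
  rw [sum_congr rfl e, Finset.sum_sub_distrib, ← Finset.mul_sum, bin_m1 n hq, bin_sum n hq]
  ring

private lemma bin_cm2 (n : ℕ) (p : ℝ) :
    ∑ i ∈ range (n+1), (n.choose i : ℝ) * p ^ i * (1-p) ^ (n-i) * ((i:ℝ) - (n:ℝ)*p)^2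
      = (n:ℝ) * p * (1-p) := by
  have hq : p + (1-p) = 1 := by ring
  have e : ∀ i ∈ range (n+1), (n.choose i : ℝ) * p ^ i * (1-p) ^ (n-i) * ((i:ℝ) - (n:ℝ)*p)^2
      = ((n.choose i : ℝ) * p ^ i * (1-p) ^ (n-i) * ((i:ℝ) * ((i:ℝ)-1)))
        + (1 - 2*((n:ℝ)*p)) * ((n.choose i : ℝ) * p ^ i * (1-p) ^ (n-i) * ((i:ℝ)))
        + ((n:ℝ)*p)^2 * ((n.choose i : ℝ) * p ^ i * (1-p) ^ (n-i)) := fun i _ => by ring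
  rw [sum_congr rfl e, Finset.sum_add_distrib, Finset.sum_add_distrib, ← Finset.mul_sum,
    ← Finset.mul_sum, bin_m2 n hq, bin_m1 n hq, bin_sum n hq]
  ring

private lemma bin_cm4 (n : ℕ) (p : ℝ) :
    ∑ i ∈ range (n+1), (n.choose i : ℝ) * p ^ i * (1-p) ^ (n-i) * ((i:ℝ) - (n:ℝ)*p)^4
      = 3*((n:ℝ)*p*(1-p))^2 + (n:ℝ)*p*(1-p) - 6*(n:ℝ)*p^2*(1-p)^2 := by
  have hq : p + (1-p) = 1 := by ring
  have e : ∀ i ∈ range (n+1), (n.choose i : ℝ) * p ^ i * (1-p) ^ (n-i) * ((i:ℝ) - (n:ℝ)*p)^4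
      = ((n.choose i : ℝ) * p ^ i * (1-p) ^ (n-i) * ((i:ℝ) * (((i:ℝ)-1) * (((i:ℝ)-2) * ((i:ℝ)-3)))))
        + (6 - 4*((n:ℝ)*p)) * ((n.choose i : ℝ) * p ^ i * (1-p) ^ (n-i) * ((i:ℝ) * (((i:ℝ)-1) * ((i:ℝ)-2))))
        + (7 - 12*((n:ℝ)*p) + 6*((n:ℝ)*p)^2) * ((n.choose i : ℝ) * p ^ i * (1-p) ^ (n-i) * ((i:ℝ) * ((i:ℝ)-1)))
        + (1 - 4*((n:ℝ)*p) + 6*((n:ℝ)*p)^2 - 4*((n:ℝ)*p)^3) * ((n.choose i : ℝ) * p ^ i * (1-p) ^ (n-i) * ((i:ℝ)))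
        + ((n:ℝ)*p)^4 * ((n.choose i : ℝ) * p ^ i * (1-p) ^ (n-i)) := fun i _ => by ring
  rw [sum_congr rfl e, Finset.sum_add_distrib, Finset.sum_add_distrib, Finset.sum_add_distrib,
    Finset.sum_add_distrib, ← Finset.mul_sum, ← Finset.mul_sum, ← Finset.mul_sum, ← Finset.mul_sum,
    bin_m4 n hq, bin_m3 n hq, bin_m2 n hq, bin_m1 n hq, bin_sum n hq]
  ring

open Classical in
theorem stmt10 (n : ℕ) (p : ℝ) (hp0 : 0 ≤ p) (hp : p ≤ 1/2)
    (hvar : 1 ≤ (n : ℝ) * p * (1 - p)) :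
    (1/108 : ℝ) ≤ ∑ i ∈ Finset.range (n + 1),
        (if (n : ℝ) * p + Real.sqrt ((n : ℝ) * p * (1 - p)) / 5 ≤ (i : ℝ) then
          (n.choose i : ℝ) * p ^ i * (1 - p) ^ (n - i) else 0) ∧
    (1/108 : ℝ) ≤ ∑ i ∈ Finset.range (n + 1),
        (if (i : ℝ) ≤ (n : ℝ) * p - Real.sqrt ((n : ℝ) * p * (1 - p)) / 5 then
          (n.choose i : ℝ) * p ^ i * (1 - p) ^ (n - i) else 0) := by
  have hq0 : (0:ℝ) ≤ 1 - p := by linarith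
  have hq : p + (1-p) = 1 := by ring
  set V : ℝ := (n:ℝ) * p * (1-p) with hVdef
  have hw : ∀ i ∈ range (n+1), (0:ℝ) ≤ (n.choose i : ℝ) * p ^ i * (1-p) ^ (n-i) :=
    fun i _ => mul_nonneg (mul_nonneg (Nat.cast_nonneg _) (pow_nonneg hp0 _)) (pow_nonneg hq0 _)
  -- fourth moment bound
  have h4b : ∑ i ∈ range (n+1), (n.choose i : ℝ) * p ^ i * (1-p) ^ (n-i) * ((i:ℝ) - (n:ℝ)*p)^4
      ≤ 4 * V^2 := by
    rw [bin_cm4 n p]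
    have hnp : (0:ℝ) ≤ (n:ℝ)*p^2*(1-p)^2 := by positivity
    nlinarith [hvar, hnp]
  constructor
  · have h := tail_lemma (range (n+1))
      (fun i => (n.choose i : ℝ) * p ^ i * (1-p) ^ (n-i))
      (fun i => (i:ℝ) - (n:ℝ)*p) hw (bin_sum n hq) (bin_cm1 n p) hvar (bin_cm2 n p) h4b
    refine le_trans h (le_of_eq (sum_congr rfl fun i _ => ?_))
    refine if_congr ⟨fun h' => by linarith, fun h' => by linarith⟩ rfl rfl
  · have h1' : ∑ i ∈ range (n+1), (n.choose i : ℝ) * p ^ i * (1-p) ^ (n-i) * ((n:ℝ)*p - (i:ℝ)) = 0 := by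
      have e : ∀ i ∈ range (n+1), (n.choose i : ℝ) * p ^ i * (1-p) ^ (n-i) * ((n:ℝ)*p - (i:ℝ))
          = -((n.choose i : ℝ) * p ^ i * (1-p) ^ (n-i) * ((i:ℝ) - (n:ℝ)*p)) := fun i _ => by ring
      rw [sum_congr rfl e, Finset.sum_neg_distrib, bin_cm1 n p, neg_zero]
    have h2' : ∑ i ∈ range (n+1), (n.choose i : ℝ) * p ^ i * (1-p) ^ (n-i) * ((n:ℝ)*p - (i:ℝ))^2 = V := by
      have e : ∀ i ∈ range (n+1), (n.choose i : ℝ) * p ^ i * (1-p) ^ (n-i) * ((n:ℝ)*p - (i:ℝ))^2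
          = (n.choose i : ℝ) * p ^ i * (1-p) ^ (n-i) * ((i:ℝ) - (n:ℝ)*p)^2 := fun i _ => by ring
      rw [sum_congr rfl e, bin_cm2 n p]
    have h4' : ∑ i ∈ range (n+1), (n.choose i : ℝ) * p ^ i * (1-p) ^ (n-i) * ((n:ℝ)*p - (i:ℝ))^4 ≤ 4 * V^2 := by
      have e : ∀ i ∈ range (n+1), (n.choose i : ℝ) * p ^ i * (1-p) ^ (n-i) * ((n:ℝ)*p - (i:ℝ))^4
          = (n.choose i : ℝ) * p ^ i * (1-p) ^ (n-i) * ((i:ℝ) - (n:ℝ)*p)^4 := fun i _ => by ring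
      rw [sum_congr rfl e]
      exact h4b
    have h := tail_lemma (range (n+1))
      (fun i => (n.choose i : ℝ) * p ^ i * (1-p) ^ (n-i))
      (fun i => (n:ℝ)*p - (i:ℝ)) hw (bin_sum n hq) h1' hvar h2' h4'
    refine le_trans h (le_of_eq (sum_congr rfl fun i _ => ?_))
    refine if_congr ⟨fun h' => by linarith, fun h' => by linarith⟩ rfl rfl
end

section
/- Let Hyp(n, m, k) denote the hypergeometric distribution (the number of marked elements when drawing k elements without replacement from an n-element set containing m marked elements) and let Bin(k, p) with p = m/n satisfy kp(1−p) ≥ 1. Then the total variation distance between Hyp(n, m, k) and Bin(k, p) is at most (k−1)/(n−1). -/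
set_option maxHeartbeats 1000000

open intervalIntegral MeasureTheory Finset



lemma intg_aux (a b : ℕ) (u v : ℝ) :
    IntervalIntegrable (fun t : ℝ => t ^ a * (1 - t) ^ b) volume u v := by
  apply Continuous.intervalIntegrable; continuity

lemma parts (a b : ℕ) (p : ℝ) :
    ((a:ℝ)+1) * ∫ t in (0:ℝ)..p, t^a*(1-t)^(b+1)
      = p^(a+1)*(1-p)^(b+1) + ((b:ℝ)+1) * ∫ t in (0:ℝ)..p, t^(a+1)*(1-t)^b := by
  have hderiv : ∀ t ∈ Set.uIcc (0:ℝ) p,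
      HasDerivAt (fun t : ℝ => t^(a+1)*(1-t)^(b+1))
        (((a:ℝ)+1) * t^a*(1-t)^(b+1) - ((b:ℝ)+1) * (t^(a+1)*(1-t)^b)) t := by
    intro t _
    have h1 : HasDerivAt (fun t : ℝ => t^(a+1)) (((a:ℝ)+1) * t^a) t := by
      simpa using hasDerivAt_pow (a+1) t
    have h2 : HasDerivAt (fun t : ℝ => (1-t)^(b+1)) (((b:ℝ)+1) * (1-t)^b * (-1)) t := by
      have := ((hasDerivAt_id t).const_sub 1).pow (b+1)
      simpa [Pi.pow_def] using this
    have := h1.mul h2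
    exact this.congr_deriv (by ring)
  have hint : IntervalIntegrable
      (fun t : ℝ => ((a:ℝ)+1) * t^a*(1-t)^(b+1) - ((b:ℝ)+1) * (t^(a+1)*(1-t)^b))
      volume 0 p := by
    apply Continuous.intervalIntegrable
    continuity
  have key := intervalIntegral.integral_eq_sub_of_hasDerivAt hderiv hint
  have hsplit : ∫ t in (0:ℝ)..p,
      (((a:ℝ)+1) * t^a*(1-t)^(b+1) - ((b:ℝ)+1) * (t^(a+1)*(1-t)^b))
      = ((a:ℝ)+1) * (∫ t in (0:ℝ)..p, t^a*(1-t)^(b+1))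
        - ((b:ℝ)+1) * ∫ t in (0:ℝ)..p, t^(a+1)*(1-t)^b := by
    rw [intervalIntegral.integral_sub]
    · congr 1
      · rw [← intervalIntegral.integral_const_mul]
        congr 1; ext t; ring
      · rw [← intervalIntegral.integral_const_mul]
    · apply Continuous.intervalIntegrable; continuity
    · apply Continuous.intervalIntegrable; continuity
  rw [hsplit] at key
  simp only [zero_pow, ne_eq, Nat.succ_ne_zero, not_false_iff, zero_mul, sub_zero] at key
  linarith [key]

lemma tailInt : ∀ (d x : ℕ) (p : ℝ),
    ∑ j ∈ Finset.Ico (x+1) (x+d+2), ((x+d+1).choose j : ℝ)*p^j*(1-p)^(x+d+1-j)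
      = ((d:ℝ)+1) * ((x+d+1).choose x : ℝ) * ∫ t in (0:ℝ)..p, t^x*(1-t)^d := by
  intro d
  induction d with
  | zero =>
    intro x p
    have h1 : Finset.Ico (x+1) (x+0+2) = {x+1} := by
      ext j; simp only [Finset.mem_Ico, Finset.mem_singleton]; omega
    rw [h1]
    simp only [Finset.sum_singleton]
    have h2 : (∫ t in (0:ℝ)..p, t^x*(1-t)^0) = p^(x+1)/((x:ℝ)+1) := by
      have : ∀ t ∈ Set.uIcc (0:ℝ) p, (fun t : ℝ => t^x*(1-t)^0) t = (fun t : ℝ => t^x) t := by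
        intro t _; simp
      rw [intervalIntegral.integral_congr this, integral_pow]
      simp
    rw [h2]
    have h3 : (x+0+1).choose (x+1) = 1 := by simp
    have h4 : (x+0+1).choose x = x+1 := by
      simpa using Nat.choose_succ_self_right x
    rw [h3, h4]
    have hx : ((x:ℝ)+1) ≠ 0 := by positivity
    have : x+0+1-(x+1) = 0 := by omega
    rw [this]
    push_cast
    field_simp
    ring
  | succ d ih =>
    intro x p
    have hsplit : ∑ j ∈ Finset.Ico (x+1) (x+(d+1)+2), ((x+(d+1)+1).choose j : ℝ)*p^j*(1-p)^(x+(d+1)+1-j)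
        = ((x+d+2).choose (x+1) : ℝ)*p^(x+1)*(1-p)^(d+1)
          + ∑ j ∈ Finset.Ico (x+2) (x+d+3), ((x+d+2).choose j : ℝ)*p^j*(1-p)^(x+d+2-j) := by
      have h1 : x+1 < x+(d+1)+2 := by omega
      rw [Finset.sum_eq_sum_Ico_succ_bot h1]
      have e1 : x+(d+1)+1 = x+d+2 := by omega
      have e2 : x+(d+1)+2 = x+d+3 := by omega
      have e3 : x+d+2-(x+1) = d+1 := by omega
      rw [e1, e2, e3]
    rw [hsplit]
    have ihx := ih (x+1) p
    have e4 : x+1+d+1 = x+d+2 := by omega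
    have e5 : x+1+d+2 = x+d+3 := by omega
    rw [e4, e5] at ihx
    rw [ihx]
    have hparts := parts x d p
    -- (x+1)*∫ t^x (1-t)^{d+1} = p^{x+1}(1-p)^{d+1} + (d+1)*∫ t^{x+1}(1-t)^d
    -- choose identity: ((x+d+2).choose (x+1)) * (x+1) = ((x+d+2).choose x) * (d+2)
    have hch : ((x+d+2).choose (x+1)) * (x+1) = ((x+d+2).choose x) * (d+2) := by
      have := Nat.choose_succ_right_eq (x+d+2) x
      have e : x+d+2-x = d+2 := by omega
      rw [e] at this
      exact this
    have hchR : (((x+d+2).choose (x+1)) : ℝ) * ((x:ℝ)+1) = (((x+d+2).choose x) : ℝ) * ((d:ℝ)+2) := by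
      exact_mod_cast congrArg (Nat.cast : ℕ → ℝ) hch
    have e7 : x+(d+1)+1 = x+d+2 := by omega
    rw [e7]
    -- goal: C(k,x+1) p^{x+1}(1-p)^{d+1} + (d+1) C(k,x+1) ∫ t^{x+1}(1-t)^d = (d+2) C(k,x) ∫ t^x (1-t)^{d+1}
    have hx1 : ((x:ℝ)+1) ≠ 0 := by positivity
    have key : (((x+d+2).choose (x+1)) : ℝ) * (((x:ℝ)+1) * ∫ t in (0:ℝ)..p, t^x*(1-t)^(d+1))
        = (((x+d+2).choose (x+1)) : ℝ) * (p^(x+1)*(1-p)^(d+1) + ((d:ℝ)+1) * ∫ t in (0:ℝ)..p, t^(x+1)*(1-t)^d) := by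
      rw [hparts]
    push_cast
    linear_combination (-1) * key + (∫ t in (0:ℝ)..p, t ^ x * (1 - t) ^ (d + 1)) * hchR



lemma intFull (d x : ℕ) :
    (∫ t in (0:ℝ)..1, t^x*(1-t)^d) = 1/(((d:ℝ)+1)*((x+d+1).choose x : ℝ)) := by
  have h := tailInt d x 1
  have hs : ∑ j ∈ Finset.Ico (x+1) (x+d+2), ((x+d+1).choose j : ℝ)*(1:ℝ)^j*(1-1:ℝ)^(x+d+1-j) = 1 := by
    rw [Finset.sum_eq_single (x+d+1)]
    · simp
    · intro j hj hne
      have hj' : j < x+d+1 := by simp [Finset.mem_Ico] at hj; omega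
      have : (1-1:ℝ)^(x+d+1-j) = 0 := by
        rw [sub_self]
        exact zero_pow (by omega)
      rw [this]; ring
    · intro hj
      exact absurd (by simp only [Finset.mem_Ico]; omega : x+d+1 ∈ Finset.Ico (x+1) (x+d+2)) hj
  rw [hs] at h
  have hpos : ((d:ℝ)+1)*((x+d+1).choose x : ℝ) ≠ 0 := by
    have : 0 < (x+d+1).choose x := Nat.choose_pos (by omega)
    positivity
  field_simp at h ⊢
  rw [eq_div_iff (Nat.cast_ne_zero.mpr (Nat.choose_pos (by omega)).ne')]
  linear_combination -h

lemma mono1 (x d : ℕ) (p : ℝ) (h0 : 0 ≤ p) (h1 : p ≤ 1) :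
    (1-p) * ∫ t in (0:ℝ)..p, t^x*(1-t)^d ≤ ∫ t in (0:ℝ)..p, t^x*(1-t)^(d+1) := by
  rw [← intervalIntegral.integral_const_mul]
  apply intervalIntegral.integral_mono_on h0
  · exact (Continuous.intervalIntegrable (by continuity) _ _)
  · exact intg_aux _ _ _ _
  · intro t ht
    have h2 : (0:ℝ) ≤ t^x*(1-t)^d :=
      mul_nonneg (pow_nonneg ht.1 x) (pow_nonneg (by linarith [ht.2]) d)
    calc (1-p) * (t^x*(1-t)^d) ≤ (1-t) * (t^x*(1-t)^d) :=
          mul_le_mul_of_nonneg_right (by linarith [ht.2]) h2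
      _ = t^x*(1-t)^(d+1) := by ring

lemma reflect (k x : ℕ) (hx : x ≤ k) (f : ℕ → ℝ) :
    ∑ j ∈ Finset.range x, f j = ∑ j ∈ Finset.Ico (k+1-x) (k+1), f (k-j) := by
  apply Finset.sum_bij' (fun j _ => k - j) (fun j _ => k - j)
  · intro a ha; simp [Finset.mem_Ico] at *; omega
  · intro a ha; simp [Finset.mem_Ico] at *; omega
  · intro a ha; simp [Finset.mem_Ico] at ha; omega
  · intro a ha; simp [Finset.mem_Ico] at ha; omega
  · intro a ha; simp [Finset.mem_Ico] at ha
    congr 1; omega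

lemma swapInt (x d : ℕ) (p : ℝ) :
    (∫ t in (0:ℝ)..(1-p), t^d*(1-t)^x) = ∫ t in p..1, t^x*(1-t)^d := by
  have h := intervalIntegral.integral_comp_sub_left (fun u : ℝ => u^x*(1-u)^d) 1 (a := 0) (b := 1-p)
  have e1 : (1:ℝ) - (1-p) = p := by ring
  have e2 : (1:ℝ) - 0 = 1 := by ring
  rw [e1, e2] at h
  rw [← h]
  apply intervalIntegral.integral_congr
  intro t _
  simp only
  ring_nf

lemma steinBound (k x : ℕ) (hx1 : 1 ≤ x) (hxk : x+1 ≤ k) (p : ℝ) (hp : 0 < p) (hp1 : p < 1) :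
    (∑ j ∈ Finset.Ico (x+1) (k+1), (k.choose j:ℝ)*p^j*(1-p)^(k-j)) / (p*((k:ℝ)-x))
    + (∑ j ∈ Finset.range x, (k.choose j:ℝ)*p^j*(1-p)^(k-j)) / ((1-p)*x)
    ≤ 1/(((k:ℝ)+1)*(p*(1-p))) := by
  have hq : (0:ℝ) < 1 - p := by linarith
  -- tail representation
  have htail := tailInt (k-1-x) x p
  have e1 : x+(k-1-x)+1 = k := by omega
  have e2 : x+(k-1-x)+2 = k+1 := by omega
  rw [e1, e2] at htail
  have e3 : ((k-1-x : ℕ):ℝ) + 1 = (k:ℝ) - x := by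
    have h6 : (k-1-x:ℕ) = k-(x+1) := by omega
    rw [h6, Nat.cast_sub hxk]
    push_cast
    ring
  rw [e3] at htail
  -- head representation
  have hhead : ∑ j ∈ Finset.range x, (k.choose j:ℝ)*p^j*(1-p)^(k-j)
      = (x:ℝ) * (k.choose x : ℝ) * ∫ t in (0:ℝ)..(1-p), t^(k-x)*(1-t)^(x-1) := by
    rw [reflect k x (by omega : x ≤ k) (fun j => (k.choose j:ℝ)*p^j*(1-p)^(k-j))]
    have hcong : ∀ j ∈ Finset.Ico (k+1-x) (k+1),
        (k.choose (k-j):ℝ)*p^(k-j)*(1-p)^(k-(k-j)) = (k.choose j : ℝ)*(1-p)^j*(1-(1-p))^(k-j) := by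
      intro j hj
      simp only [Finset.mem_Ico] at hj
      have hjk : j ≤ k := by omega
      have h4 : k - (k-j) = j := by omega
      have h7 : k.choose (k-j) = k.choose j := Nat.choose_symm hjk
      rw [h4, h7]
      have h8 : (1:ℝ) - (1-p) = p := by ring
      rw [h8]
      ring
    rw [Finset.sum_congr rfl hcong]
    have ht2 := tailInt (x-1) (k-x) (1-p)
    have f1 : (k-x)+(x-1)+1 = k := by omega
    have f2 : (k-x)+(x-1)+2 = k+1 := by omega
    have f3 : (k-x)+1 = k+1-x := by omega
    rw [f1, f2, f3] at ht2
    rw [ht2]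
    have f4 : ((x-1:ℕ):ℝ) + 1 = (x:ℝ) := by
      rw [Nat.cast_sub hx1]
      push_cast
      ring
    have f5 : k.choose (k-x) = k.choose x := Nat.choose_symm (by omega)
    rw [f4, f5]
  rw [htail, hhead]
  set C : ℝ := (k.choose x : ℝ) with hC
  have hCpos : (0:ℝ) < C := by
    rw [hC]
    exact_mod_cast Nat.choose_pos (by omega : x ≤ k)
  have hkx : (0:ℝ) < (k:ℝ) - x := by
    have : (x:ℝ) + 1 ≤ (k:ℝ) := by exact_mod_cast hxk
    linarith
  have hxR : (0:ℝ) < (x:ℝ) := by exact_mod_cast hx1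
  set I1 : ℝ := ∫ t in (0:ℝ)..p, t^x*(1-t)^(k-1-x) with hI1
  set I2 : ℝ := ∫ t in (0:ℝ)..(1-p), t^(k-x)*(1-t)^(x-1) with hI2
  -- simplify LHS
  have lhs_eq : (((k:ℝ)-x) * C * I1) / (p*((k:ℝ)-x)) + ((x:ℝ) * C * I2) / ((1-p)*x)
      = C / (p*(1-p)) * ((1-p)*I1 + p*I2) := by
    field_simp
  rw [lhs_eq]
  -- monotone bounds
  have hm1 : (1-p)*I1 ≤ ∫ t in (0:ℝ)..p, t^x*(1-t)^(k-x) := by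
    have := mono1 x (k-1-x) p (le_of_lt hp) (le_of_lt hp1)
    have e : (k-1-x)+1 = k-x := by omega
    rw [e] at this
    exact this
  have hm2 : p*I2 ≤ ∫ t in (0:ℝ)..(1-p), t^(k-x)*(1-t)^x := by
    have := mono1 (k-x) (x-1) (1-p) (by linarith) (by linarith)
    have e : (x-1)+1 = x := by omega
    rw [e] at this
    have e8 : (1:ℝ) - (1-p) = p := by ring
    rw [e8] at this
    exact this
  have hswap : (∫ t in (0:ℝ)..(1-p), t^(k-x)*(1-t)^x) = ∫ t in p..1, t^x*(1-t)^(k-x) :=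
    swapInt x (k-x) p
  have hadd : (∫ t in (0:ℝ)..p, t^x*(1-t)^(k-x)) + (∫ t in p..1, t^x*(1-t)^(k-x))
      = ∫ t in (0:ℝ)..1, t^x*(1-t)^(k-x) :=
    intervalIntegral.integral_add_adjacent_intervals (intg_aux _ _ _ _) (intg_aux _ _ _ _)
  have hfull : (∫ t in (0:ℝ)..1, t^x*(1-t)^(k-x)) = 1/((((k-x):ℕ):ℝ)+1)/((x+(k-x)+1).choose x : ℝ) := by
    rw [intFull (k-x) x]
    rw [div_div]
  have e9 : x+(k-x)+1 = k+1 := by omega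
  rw [e9] at hfull
  have hsum : (1-p)*I1 + p*I2 ≤ 1/((((k-x):ℕ):ℝ)+1)/((k+1).choose x : ℝ) := by
    rw [← hfull, ← hadd]
    have := hm2
    rw [hswap] at this
    linarith [hm1, this]
  -- combine
  have hCp : 0 < C / (p*(1-p)) := by positivity
  have step : C / (p*(1-p)) * ((1-p)*I1 + p*I2)
      ≤ C / (p*(1-p)) * (1/((((k-x):ℕ):ℝ)+1)/((k+1).choose x : ℝ)) :=
    mul_le_mul_of_nonneg_left hsum (le_of_lt hCp)
  refine le_trans step (le_of_eq ?_)
  -- C/(pq) * 1/((k-x+1) C(k+1,x)) = 1/((k+1) p q)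
  have hch := Nat.choose_mul_succ_eq k x
  -- k.choose x * (k+1) = (k+1).choose x * (k+1-x)
  have hC1pos : (0:ℝ) < ((k+1).choose x : ℝ) := by
    exact_mod_cast Nat.choose_pos (by omega : x ≤ k+1)
  have hcast : ((((k-x):ℕ):ℝ)+1) = ((k+1-x : ℕ):ℝ) := by
    rw [Nat.cast_sub (by omega : x ≤ k), Nat.cast_sub (by omega : x ≤ k+1)]
    push_cast
    ring
  rw [hcast]
  have hchR : C * ((k:ℝ)+1) = ((k+1).choose x : ℝ) * ((k+1-x:ℕ):ℝ) := by
    rw [hC]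
    exact_mod_cast congrArg (Nat.cast : ℕ → ℝ) hch
  have hk1x : (0:ℝ) < ((k+1-x:ℕ):ℝ) := by
    have : 0 < k+1-x := by omega
    exact_mod_cast this
  have hk1 : (0:ℝ) < (k:ℝ)+1 := by positivity
  field_simp
  linear_combination hchR


lemma bin_rec (k j : ℕ) (hj : j+1 ≤ k) :
    ((j:ℝ)+1) * (k.choose (j+1):ℝ) = ((k:ℝ)-j) * (k.choose j : ℝ) := by
  have h := Nat.choose_succ_right_eq k j
  have hR : (k.choose (j+1) : ℝ) * ((j:ℝ)+1) = (k.choose j : ℝ) * ((k-j:ℕ):ℝ) := by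
    exact_mod_cast congrArg (Nat.cast : ℕ → ℝ) h
  rw [Nat.cast_sub (by omega)] at hR
  linarith [hR]

lemma T1 (k x j : ℕ) (hxj : x ≤ j) (hj : j+1 ≤ k) (p : ℝ) (hp : 0 < p) (hp1 : p < 1) :
    (1-p)*x * ((k.choose (j+1):ℝ)*p^(j+1)*(1-p)^(k-(j+1)))
    ≤ p*((k:ℝ)-x) * ((k.choose j:ℝ)*p^j*(1-p)^(k-j)) := by
  have e : k-j = (k-(j+1))+1 := by omega
  rw [e, pow_succ]
  have hq0 : (0:ℝ) < 1-p := by linarith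
  have hP : (0:ℝ) < p^(j+1)*(1-p)^(k-(j+1)) := mul_pos (pow_pos hp _) (pow_pos hq0 _)
  have key : (x:ℝ) * (k.choose (j+1):ℝ) ≤ ((k:ℝ)-x) * (k.choose j : ℝ) := by
    have hb := bin_rec k j hj
    have hj1 : (0:ℝ) < (j:ℝ)+1 := by positivity
    have hxR : (x:ℝ) ≤ (j:ℝ) := by exact_mod_cast hxj
    have hjk : (j:ℝ)+1 ≤ (k:ℝ) := by exact_mod_cast hj
    have hk0 : (0:ℝ) ≤ (k:ℝ) := by positivity
    have hcn : (0:ℝ) ≤ (k.choose j : ℝ) := by positivity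
    have h1 : ((j:ℝ)+1) * ((x:ℝ) * (k.choose (j+1):ℝ)) = (x:ℝ) * (((k:ℝ)-j) * (k.choose j:ℝ)) := by
      rw [← hb]; ring
    have hs : (x:ℝ)*((k:ℝ)-j) ≤ ((j:ℝ)+1)*((k:ℝ)-x) := by nlinarith
    have h2 : (x:ℝ) * (((k:ℝ)-j) * (k.choose j:ℝ)) ≤ ((j:ℝ)+1) * (((k:ℝ)-x) * (k.choose j:ℝ)) := by
      have := mul_le_mul_of_nonneg_right hs hcn
      nlinarith [this]
    apply le_of_mul_le_mul_left _ hj1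
    calc ((j:ℝ)+1) * ((x:ℝ) * (k.choose (j+1):ℝ)) = (x:ℝ) * (((k:ℝ)-j) * (k.choose j:ℝ)) := h1
      _ ≤ ((j:ℝ)+1) * (((k:ℝ)-x) * (k.choose j : ℝ)) := h2
  calc (1-p)*x * ((k.choose (j+1):ℝ)*p^(j+1)*((1-p)^(k-(j+1))))
      = ((x:ℝ) * (k.choose (j+1):ℝ)) * (p^(j+1)*(1-p)^(k-(j+1))) * (1-p) := by ring
    _ ≤ (((k:ℝ)-x) * (k.choose j : ℝ)) * (p^(j+1)*(1-p)^(k-(j+1))) * (1-p) := by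
        apply mul_le_mul_of_nonneg_right _ (by linarith)
        exact mul_le_mul_of_nonneg_right key (le_of_lt hP)
    _ = p*((k:ℝ)-x) * ((k.choose j:ℝ)*p^j*((1-p)^(k-(j+1))*(1-p))) := by
        rw [pow_succ]; ring

lemma T2 (k x j : ℕ) (hjx : j+1 ≤ x) (hxk : x+1 ≤ k) (p : ℝ) (hp : 0 < p) (hp1 : p < 1) :
    p*((k:ℝ)-x) * ((k.choose j:ℝ)*p^j*(1-p)^(k-j))
    ≤ (1-p)*x * ((k.choose (j+1):ℝ)*p^(j+1)*(1-p)^(k-(j+1))) := by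
  have e : k-j = (k-(j+1))+1 := by omega
  rw [e, pow_succ]
  have hq0 : (0:ℝ) < 1-p := by linarith
  have hP : (0:ℝ) < p^(j+1)*(1-p)^(k-(j+1)) := mul_pos (pow_pos hp _) (pow_pos hq0 _)
  have key : ((k:ℝ)-x) * (k.choose j : ℝ) ≤ (x:ℝ) * (k.choose (j+1):ℝ) := by
    have hb := bin_rec k j (by omega)
    have hj1 : (0:ℝ) < (j:ℝ)+1 := by positivity
    have hxR : (j:ℝ)+1 ≤ (x:ℝ) := by exact_mod_cast hjx
    have hjk : (x:ℝ)+1 ≤ (k:ℝ) := by exact_mod_cast hxk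
    have hk0 : (0:ℝ) ≤ (k:ℝ) := by positivity
    have hcn : (0:ℝ) ≤ (k.choose j : ℝ) := by positivity
    have h1 : ((j:ℝ)+1) * ((x:ℝ) * (k.choose (j+1):ℝ)) = (x:ℝ) * (((k:ℝ)-j) * (k.choose j:ℝ)) := by
      rw [← hb]; ring
    have hs : ((j:ℝ)+1)*((k:ℝ)-x) ≤ (x:ℝ)*((k:ℝ)-j) := by nlinarith
    have h2 : ((j:ℝ)+1) * (((k:ℝ)-x) * (k.choose j:ℝ)) ≤ (x:ℝ) * (((k:ℝ)-j) * (k.choose j:ℝ)) := by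
      have := mul_le_mul_of_nonneg_right hs hcn
      nlinarith [this]
    apply le_of_mul_le_mul_left _ hj1
    calc ((j:ℝ)+1) * (((k:ℝ)-x) * (k.choose j : ℝ)) ≤ (x:ℝ) * (((k:ℝ)-j) * (k.choose j:ℝ)) := h2
      _ = ((j:ℝ)+1) * ((x:ℝ) * (k.choose (j+1):ℝ)) := h1.symm
  calc p*((k:ℝ)-x) * ((k.choose j:ℝ)*p^j*((1-p)^(k-(j+1))*(1-p))) 
      = (((k:ℝ)-x) * (k.choose j : ℝ)) * (p^(j+1)*(1-p)^(k-(j+1))) * (1-p) := by ring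
    _ ≤ ((x:ℝ) * (k.choose (j+1):ℝ)) * (p^(j+1)*(1-p)^(k-(j+1))) * (1-p) := by
        apply mul_le_mul_of_nonneg_right _ (by linarith)
        exact mul_le_mul_of_nonneg_right key (le_of_lt hP)
    _ = (1-p)*x * ((k.choose (j+1):ℝ)*p^(j+1)*(1-p)^(k-(j+1))) := by ring

lemma S1 (k x : ℕ) (hx1 : 1 ≤ x) (hxk : x+1 ≤ k) (p : ℝ) (hp : 0 < p) (hp1 : p < 1) :
    (1-p)*x * ∑ j ∈ Finset.Ico (x+1) (k+1), (k.choose j:ℝ)*p^j*(1-p)^(k-j)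
    ≤ p*((k:ℝ)-x) * ∑ j ∈ Finset.Ico x (k+1), (k.choose j:ℝ)*p^j*(1-p)^(k-j) := by
  rw [Finset.sum_Ico_eq_sum_range, Finset.sum_Ico_eq_sum_range]
  have e1 : k+1-(x+1) = k-x := by omega
  have e2 : k+1-x = (k-x)+1 := by omega
  rw [e1, e2, Finset.sum_range_succ, Finset.mul_sum, mul_add, Finset.mul_sum]
  have hlast : 0 ≤ p*((k:ℝ)-x) * ((k.choose (x+(k-x)):ℝ)*p^(x+(k-x))*(1-p)^(k-(x+(k-x)))) := by
    have hkx : (0:ℝ) ≤ (k:ℝ)-x := by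
      have : (x:ℝ)+1 ≤ (k:ℝ) := by exact_mod_cast hxk
      linarith
    have hq0 : (0:ℝ) ≤ 1-p := by linarith
    exact mul_nonneg (mul_nonneg hp.le hkx)
      (mul_nonneg (mul_nonneg (Nat.cast_nonneg _) (pow_nonneg hp.le _)) (pow_nonneg hq0 _))
  have hmain : ∑ i ∈ Finset.range (k-x), (1-p)*x * ((k.choose (x+1+i):ℝ)*p^(x+1+i)*(1-p)^(k-(x+1+i)))
      ≤ ∑ i ∈ Finset.range (k-x), p*((k:ℝ)-x) * ((k.choose (x+i):ℝ)*p^(x+i)*(1-p)^(k-(x+i))) := by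
    apply Finset.sum_le_sum
    intro i hi
    simp only [Finset.mem_range] at hi
    have := T1 k x (x+i) (by omega) (by omega) p hp hp1
    have e3 : x+i+1 = x+1+i := by omega
    rw [e3] at this
    exact this
  linarith [hmain, hlast]

lemma S2 (k x : ℕ) (hx1 : 1 ≤ x) (hxk : x+1 ≤ k) (p : ℝ) (hp : 0 < p) (hp1 : p < 1) :
    p*((k:ℝ)-x) * ∑ j ∈ Finset.range x, (k.choose j:ℝ)*p^j*(1-p)^(k-j)
    ≤ (1-p)*x * ∑ j ∈ Finset.range (x+1), (k.choose j:ℝ)*p^j*(1-p)^(k-j) := by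
  rw [Finset.sum_range_succ' (fun j => (k.choose j:ℝ)*p^j*(1-p)^(k-j)) x]
  rw [Finset.mul_sum, mul_add, Finset.mul_sum]
  have hmain : ∑ j ∈ Finset.range x, p*((k:ℝ)-x) * ((k.choose j:ℝ)*p^j*(1-p)^(k-j))
      ≤ ∑ j ∈ Finset.range x, (1-p)*x * ((k.choose (j+1):ℝ)*p^(j+1)*(1-p)^(k-(j+1))) := by
    apply Finset.sum_le_sum
    intro j hj
    simp only [Finset.mem_range] at hj
    exact T2 k x j (by omega) hxk p hp hp1
  have h0 : 0 ≤ (1-p)*x * ((k.choose 0:ℝ)*p^0*(1-p)^(k-0)) := by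
    have hq0 : (0:ℝ) ≤ 1-p := by linarith
    exact mul_nonneg (mul_nonneg hq0 (Nat.cast_nonneg _))
      (mul_nonneg (mul_nonneg (Nat.cast_nonneg _) (pow_nonneg hp.le _)) (pow_nonneg hq0 _))
  linarith [hmain, h0]


lemma vandermonde_range (m a k : ℕ) :
    ∑ i ∈ Finset.range (k+1), m.choose i * a.choose (k-i) = (m+a).choose k := by
  rw [Nat.add_choose_eq]
  rw [Finset.Nat.sum_antidiagonal_eq_sum_range_succ_mk]

lemma choose_rec_real (a r : ℕ) (hr : 1 ≤ r) :
    (r:ℝ) * (a.choose r : ℝ) = ((a:ℝ)-r+1) * (a.choose (r-1) : ℝ) := by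
  rcases le_or_gt r (a+1) with h | h
  · have key := Nat.choose_succ_right_eq a (r-1)
    have e : r-1+1 = r := by omega
    rw [e] at key
    -- a.choose r * r = a.choose (r-1) * (a - (r-1))
    have hcast : ((a - (r-1) : ℕ):ℝ) = (a:ℝ)-r+1 := by
      rw [Nat.cast_sub (by omega)]
      have : ((r-1:ℕ):ℝ) = (r:ℝ)-1 := by
        rw [Nat.cast_sub (by omega)]; simp
      rw [this]; ring
    have keyR : (a.choose r : ℝ) * (r:ℝ) = (a.choose (r-1) : ℝ) * ((a-(r-1):ℕ):ℝ) := by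
      exact_mod_cast congrArg (Nat.cast : ℕ → ℝ) key
    rw [hcast] at keyR
    linarith [keyR]
  · have h1 : a.choose r = 0 := Nat.choose_eq_zero_of_lt (by omega)
    have h2 : a.choose (r-1) = 0 := Nat.choose_eq_zero_of_lt (by omega)
    rw [h1, h2]
    simp

lemma hyp_rec (n m k i : ℕ) (hm : m ≤ n) (hik : i < k) (hk : k ≤ n) :
    ((m:ℝ)-i)*((k:ℝ)-i)*((m.choose i : ℝ)*((n-m).choose (k-i) : ℝ))
      = ((i:ℝ)+1)*((n:ℝ)-m-k+i+1)*((m.choose (i+1):ℝ)*((n-m).choose (k-i-1):ℝ)) := by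
  have N1 : ((m:ℝ)-i)*(m.choose i : ℝ) = ((i:ℝ)+1)*(m.choose (i+1) : ℝ) := by
    have := choose_rec_real m (i+1) (by omega)
    simp only [Nat.add_sub_cancel] at this
    push_cast at this
    linarith [this]
  have N2 : ((k:ℝ)-i)*((n-m).choose (k-i) : ℝ) = ((n:ℝ)-m-k+i+1)*((n-m).choose (k-i-1) : ℝ) := by
    have := choose_rec_real (n-m) (k-i) (by omega)
    have e1 : ((k-i:ℕ):ℝ) = (k:ℝ)-i := by
      rw [Nat.cast_sub (by omega)]
    have e2 : ((n-m:ℕ):ℝ) = (n:ℝ)-m := by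
      rw [Nat.cast_sub hm]
    rw [e1, e2] at this
    have e3 : (n:ℝ)-m-((k:ℝ)-i)+1 = (n:ℝ)-m-k+i+1 := by ring
    rw [e3] at this
    exact this
  calc ((m:ℝ)-i)*((k:ℝ)-i)*((m.choose i : ℝ)*((n-m).choose (k-i) : ℝ))
      = (((m:ℝ)-i)*(m.choose i : ℝ)) * (((k:ℝ)-i)*((n-m).choose (k-i) : ℝ)) := by ring
    _ = (((i:ℝ)+1)*(m.choose (i+1) : ℝ)) * (((n:ℝ)-m-k+i+1)*((n-m).choose (k-i-1) : ℝ)) := by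
        rw [N1, N2]
    _ = ((i:ℝ)+1)*((n:ℝ)-m-k+i+1)*((m.choose (i+1):ℝ)*((n-m).choose (k-i-1):ℝ)) := by ring

lemma moment_nat (m a k : ℕ) (hm1 : 1 ≤ m) (ha1 : 1 ≤ a) (hk2 : 2 ≤ k) :
    ∑ i ∈ Finset.range (k+1), i*(k-i)*(m.choose i * a.choose (k-i))
      = m*a*((m+a-2).choose (k-2)) := by
  rw [Finset.sum_range_succ]
  have hlast : k*(k-k)*(m.choose k * a.choose (k-k)) = 0 := by simp
  rw [hlast, add_zero]
  have e0 : k = (k-1)+1 := by omega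
  rw [e0, Finset.sum_range_succ']
  have h0 : 0*((k-1)+1-0)*(m.choose 0 * a.choose ((k-1)+1-0)) = 0 := by simp
  rw [h0, add_zero]
  have hterm : ∀ j ∈ Finset.range (k-1),
      (j+1)*((k-1)+1-(j+1))*(m.choose (j+1) * a.choose ((k-1)+1-(j+1)))
        = m*a*((m-1).choose j * (a-1).choose ((k-2)-j)) := by
    intro j hj
    simp only [Finset.mem_range] at hj
    have e1 : (k-1)+1-(j+1) = k-j-1 := by omega
    rw [e1]
    have id1 : (j+1) * m.choose (j+1) = m * (m-1).choose j := by
      have := Nat.add_one_mul_choose_eq (m-1) j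
      have em : (m-1)+1 = m := by omega
      rw [em] at this
      rw [mul_comm]; exact this.symm
    have id2 : (k-j-1) * a.choose (k-j-1) = a * (a-1).choose ((k-2)-j) := by
      have := Nat.add_one_mul_choose_eq (a-1) ((k-2)-j)
      have ea : (a-1)+1 = a := by omega
      have ek : (k-2)-j+1 = k-j-1 := by omega
      rw [ea, ek] at this
      rw [mul_comm]; exact this.symm
    calc (j+1)*(k-j-1)*(m.choose (j+1) * a.choose (k-j-1))
        = ((j+1)*m.choose (j+1)) * ((k-j-1)*a.choose (k-j-1)) := by ring
      _ = (m * (m-1).choose j) * (a * (a-1).choose ((k-2)-j)) := by rw [id1, id2]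
      _ = m*a*((m-1).choose j * (a-1).choose ((k-2)-j)) := by ring
  rw [Finset.sum_congr rfl hterm]
  rw [← Finset.mul_sum]
  congr 1
  have e2 : k-1 = (k-2)+1 := by omega
  rw [e2]
  have := vandermonde_range (m-1) (a-1) (k-2)
  rw [this]
  congr 1
  omega

lemma hyp_sum_one (n m k : ℕ) (hm : m ≤ n) (hk : k ≤ n) :
    ∑ i ∈ Finset.range (k+1), ((m.choose i : ℝ) * ((n-m).choose (k-i) : ℝ))/(n.choose k : ℝ) = 1 := by
  have hpos : 0 < n.choose k := Nat.choose_pos hk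
  rw [← Finset.sum_div]
  rw [div_eq_one_iff_eq (by exact_mod_cast hpos.ne')]
  have := vandermonde_range m (n-m) k
  have e : m + (n-m) = n := by omega
  rw [e] at this
  rw [← this]
  push_cast
  rfl

lemma moment_real (n m k : ℕ) (hm1 : 1 ≤ m) (hmn : m < n) (hk : k ≤ n) :
    ∑ i ∈ Finset.range (k+1), ((i:ℝ)*((k:ℝ)-i)) * (((m.choose i : ℝ) * ((n-m).choose (k-i) : ℝ))/(n.choose k : ℝ))
      = (k:ℝ)*((k:ℝ)-1)*(m:ℝ)*((n:ℝ)-m)/((n:ℝ)*((n:ℝ)-1)) := by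
  rcases le_or_gt k 1 with hk1 | hk2
  · have hz : ∀ i ∈ Finset.range (k+1), ((i:ℝ)*((k:ℝ)-i)) * (((m.choose i : ℝ) * ((n-m).choose (k-i) : ℝ))/(n.choose k : ℝ)) = 0 := by
      intro i hi
      simp only [Finset.mem_range] at hi
      interval_cases k
      · interval_cases i
        · simp
      · interval_cases i
        · simp
        · simp
    rw [Finset.sum_congr rfl hz]
    simp only [Finset.sum_const_zero]
    interval_cases k
    · simp
    · norm_num
  · have hk2' : 2 ≤ k := hk2
    have hnat := moment_nat m (n-m) k hm1 (by omega) hk2'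
    have e : m + (n-m) - 2 = n-2 := by omega
    rw [e] at hnat
    have hterm : ∀ i ∈ Finset.range (k+1),
        ((i:ℝ)*((k:ℝ)-i)) * (((m.choose i : ℝ) * ((n-m).choose (k-i) : ℝ))/(n.choose k : ℝ))
          = ((i*(k-i)*(m.choose i * (n-m).choose (k-i)) : ℕ) : ℝ) / (n.choose k : ℝ) := by
      intro i hi
      simp only [Finset.mem_range] at hi
      have eki : ((k-i:ℕ):ℝ) = (k:ℝ)-i := Nat.cast_sub (by omega)
      push_cast
      rw [eki]
      ring
    rw [Finset.sum_congr rfl hterm, ← Finset.sum_div, ← Nat.cast_sum, hnat]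
    -- now : (m*(n-m)*C(n-2,k-2) : ℕ)/C(n,k) = k(k-1)m(n-m)/(n(n-1))
    have hid : k*(k-1)*(n.choose k) = n*(n-1)*((n-2).choose (k-2)) := by
      have h1 := Nat.add_one_mul_choose_eq (n-1) (k-1)
      have en : (n-1)+1 = n := by omega
      have ek : (k-1)+1 = k := by omega
      rw [en, ek] at h1
      -- n * (n-1).choose (k-1) = n.choose k * k
      have h2 := Nat.add_one_mul_choose_eq (n-2) (k-2)
      have en2 : (n-2)+1 = n-1 := by omega
      have ek2 : (k-2)+1 = k-1 := by omega
      rw [en2, ek2] at h2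
      -- (n-1) * (n-2).choose (k-2) = (n-1).choose (k-1) * (k-1)
      calc k*(k-1)*(n.choose k) = (n.choose k * k)*(k-1) := by ring
        _ = (n * (n-1).choose (k-1))*(k-1) := by rw [h1]
        _ = n * ((n-1).choose (k-1) * (k-1)) := by ring
        _ = n * ((n-1) * (n-2).choose (k-2)) := by rw [h2]
        _ = n*(n-1)*((n-2).choose (k-2)) := by ring
    have hidR : (k:ℝ)*((k:ℝ)-1)*(n.choose k : ℝ) = (n:ℝ)*((n:ℝ)-1)*((n-2).choose (k-2) : ℝ) := by
      have := congrArg (Nat.cast : ℕ → ℝ) hid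
      push_cast at this
      have ek : ((k:ℝ)-1) = (k-1 : ℕ) := by rw [Nat.cast_sub (by omega)]; simp
      have en : ((n:ℝ)-1) = (n-1 : ℕ) := by rw [Nat.cast_sub (by omega)]; simp
      rw [ek, en]
      exact_mod_cast this
    have hCpos : (0:ℝ) < (n.choose k : ℝ) := by exact_mod_cast Nat.choose_pos hk
    have hnpos : (0:ℝ) < (n:ℝ) := by exact_mod_cast (by omega : 0 < n)
    have hn1pos : (0:ℝ) < (n:ℝ)-1 := by
      have : (2:ℝ) ≤ (n:ℝ) := by exact_mod_cast (by omega : 2 ≤ n)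
      linarith
    have emn : ((n-m:ℕ):ℝ) = (n:ℝ)-m := Nat.cast_sub (by omega)
    push_cast
    rw [emn]
    field_simp
    linear_combination (-((n:ℝ)-(m:ℝ))) * hidR


noncomputable def bfun (k : ℕ) (p : ℝ) : ℕ → ℝ := fun j => (k.choose j:ℝ)*p^j*(1-p)^(k-j)
noncomputable def hfun (A : Finset ℕ) : ℕ → ℝ := fun j => if j ∈ A then 1 else 0
noncomputable def Wc (k : ℕ) (p : ℝ) (A : Finset ℕ) : ℝ := ∑ j ∈ Finset.range (k+1), bfun k p j * hfun A j
noncomputable def Gfun (k : ℕ) (p : ℝ) (A : Finset ℕ) : ℕ → ℝ :=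
  fun y => ∑ j ∈ Finset.range y, bfun k p j * (hfun A j - Wc k p A)
noncomputable def gfun (k : ℕ) (p : ℝ) (A : Finset ℕ) : ℕ → ℝ :=
  fun x => Gfun k p A x / ((1-p) * x * bfun k p x)
noncomputable def hypf (n m k : ℕ) : ℕ → ℝ :=
  fun i => ((m.choose i:ℝ)*((n-m).choose (k-i):ℝ))/(n.choose k:ℝ)

lemma bfun_pos (k j : ℕ) (hj : j ≤ k) (p : ℝ) (hp : 0 < p) (hp1 : p < 1) : 0 < bfun k p j := by
  unfold bfun
  have h1 : 0 < k.choose j := Nat.choose_pos hj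
  have h2 : (0:ℝ) < 1 - p := by linarith
  have : (0:ℝ) < (k.choose j : ℝ) := by exact_mod_cast h1
  positivity

lemma bfun_nonneg (k j : ℕ) (p : ℝ) (hp : 0 < p) (hp1 : p < 1) : 0 ≤ bfun k p j := by
  unfold bfun
  have h2 : (0:ℝ) < 1 - p := by linarith
  positivity

lemma h01 (A : Finset ℕ) (j : ℕ) : 0 ≤ hfun A j ∧ hfun A j ≤ 1 := by
  unfold hfun; split <;> norm_num

lemma sum_bfun (k : ℕ) (p : ℝ) : ∑ j ∈ Finset.range (k+1), bfun k p j = 1 := by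
  unfold bfun
  have h2 : ∑ j ∈ Finset.range (k+1), (k.choose j:ℝ)*p^j*(1-p)^(k-j)
      = ∑ j ∈ Finset.range (k+1), p^j*(1-p)^(k-j)*(k.choose j:ℝ) := by
    apply Finset.sum_congr rfl; intro j _; ring
  rw [h2, ← add_pow]
  norm_num

lemma qb_rel (k i : ℕ) (hik : i < k) (p : ℝ) :
    (1-p)*((i:ℝ)+1)*bfun k p (i+1) = p*((k:ℝ)-i)*bfun k p i := by
  unfold bfun
  have hb : ((i:ℝ)+1) * (k.choose (i+1):ℝ) = ((k:ℝ)-i) * (k.choose i : ℝ) := by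
    have h := Nat.choose_succ_right_eq k i
    have hR : (k.choose (i+1) : ℝ) * ((i:ℝ)+1) = (k.choose i : ℝ) * ((k-i:ℕ):ℝ) := by
      exact_mod_cast congrArg (Nat.cast : ℕ → ℝ) h
    rw [Nat.cast_sub (by omega)] at hR
    linarith
  have e : k-i = (k-(i+1))+1 := by omega
  rw [e, pow_succ, pow_succ]
  linear_combination ((1-p)*(p^i*p)*(1-p)^(k-(i+1))) * hb

lemma Gtop (k : ℕ) (p : ℝ) (A : Finset ℕ) : Gfun k p A (k+1) = 0 := by
  unfold Gfun Wc
  simp only [mul_sub]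
  rw [Finset.sum_sub_distrib, ← Finset.sum_mul, sum_bfun, one_mul, sub_self]

lemma fact1 (k : ℕ) (p : ℝ) (hp : 0 < p) (hp1 : p < 1) (A : Finset ℕ) (i : ℕ) (hik : i ≤ k) :
    p*((k:ℝ)-i)*gfun k p A (i+1) = Gfun k p A (i+1) / bfun k p i := by
  rcases eq_or_lt_of_le hik with rfl | hlt
  · rw [show ((i:ℝ)-(i:ℝ)) = 0 from by ring]
    rw [Gtop]
    simp
  · unfold gfun
    have hb1 : 0 < bfun k p (i+1) := bfun_pos k (i+1) (by omega) p hp hp1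
    have hb0 : 0 < bfun k p i := bfun_pos k i (by omega) p hp hp1
    have hqb := qb_rel k i hlt p
    have hq : (0:ℝ) < 1-p := by linarith
    have hi1 : (0:ℝ) < (i:ℝ)+1 := by positivity
    have hki : (0:ℝ) < (k:ℝ)-i := by
      have : (i:ℝ)+1 ≤ (k:ℝ) := by exact_mod_cast hlt
      linarith
    rw [show (((i:ℕ)+1 : ℕ):ℝ) = (i:ℝ)+1 from by push_cast; ring]
    rw [hqb]
    rw [mul_comm p ((k:ℝ)-i)]
    field_simp
lemma fact2 (k : ℕ) (p : ℝ) (hp : 0 < p) (hp1 : p < 1) (A : Finset ℕ) (i : ℕ) (hik : i ≤ k) :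
    (1-p)*(i:ℝ)*gfun k p A i = Gfun k p A i / bfun k p i := by
  rcases Nat.eq_zero_or_pos i with rfl | hpos
  · simp [Gfun]
  · unfold gfun
    have hb0 : 0 < bfun k p i := bfun_pos k i hik p hp hp1
    have hq : (0:ℝ) < 1-p := by linarith
    have hiR : (0:ℝ) < (i:ℝ) := by exact_mod_cast hpos
    field_simp

lemma stein_eq (k : ℕ) (p : ℝ) (hp : 0 < p) (hp1 : p < 1) (A : Finset ℕ) (i : ℕ) (hik : i ≤ k) :
    hfun A i - Wc k p A = p*((k:ℝ)-i)*gfun k p A (i+1) - (1-p)*(i:ℝ)*gfun k p A i := by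
  rw [fact1 k p hp hp1 A i hik, fact2 k p hp hp1 A i hik]
  have hb0 : 0 < bfun k p i := bfun_pos k i hik p hp hp1
  have hG : Gfun k p A (i+1) = Gfun k p A i + bfun k p i * (hfun A i - Wc k p A) := by
    unfold Gfun
    rw [Finset.sum_range_succ]
  rw [hG]
  field_simp
  ring

lemma dg_bound (k x : ℕ) (hx1 : 1 ≤ x) (hxk : x+1 ≤ k) (p : ℝ) (hp : 0 < p) (hp1 : p < 1)
    (A : Finset ℕ) :
    |gfun k p A (x+1) - gfun k p A x| ≤ 1/(((k:ℝ)+1)*(p*(1-p))) := by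
  have hq : (0:ℝ) < 1-p := by linarith
  have hxR : (0:ℝ) < (x:ℝ) := by exact_mod_cast hx1
  have hkx : (0:ℝ) < (k:ℝ)-x := by
    have : (x:ℝ)+1 ≤ (k:ℝ) := by exact_mod_cast hxk
    linarith
  set d1 : ℝ := p*((k:ℝ)-x) with hd1def
  set d2 : ℝ := (1-p)*(x:ℝ) with hd2def
  have hd1 : 0 < d1 := by positivity
  have hd2 : 0 < d2 := by positivity
  set Bx : ℝ := ∑ j ∈ Finset.range x, bfun k p j with hBxdef
  set Bx1 : ℝ := ∑ j ∈ Finset.range (x+1), bfun k p j with hBx1def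
  set Tail : ℝ := ∑ j ∈ Finset.Ico (x+1) (k+1), bfun k p j with hTaildef
  set Tail' : ℝ := ∑ j ∈ Finset.Ico x (k+1), bfun k p j with hTail'def
  have hTail : Tail = 1 - Bx1 := by
    rw [hTaildef, Finset.sum_Ico_eq_sub _ (by omega : x+1 ≤ k+1), sum_bfun]
  have hTail' : Tail' = 1 - Bx := by
    rw [hTail'def, Finset.sum_Ico_eq_sub _ (by omega : x ≤ k+1), sum_bfun]
  have hBxnn : 0 ≤ Bx := Finset.sum_nonneg (fun j _ => bfun_nonneg k j p hp hp1)
  have hTailnn : 0 ≤ Tail := Finset.sum_nonneg (fun j _ => bfun_nonneg k j p hp hp1)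
  set c : ℝ := Tail/d1 + Bx/d2 with hcdef
  have hcnn : 0 ≤ c := by positivity
  have hc : c ≤ 1/(((k:ℝ)+1)*(p*(1-p))) := by
    have := steinBound k x hx1 hxk p hp hp1
    simpa [bfun, hcdef, hTaildef, hBxdef, hd1def, hd2def] using this
  have hbx : 0 < bfun k p x := bfun_pos k x (by omega) p hp hp1
  -- the weight function
  set w : ℕ → ℝ := fun j => bfun k p j *
      (((if j ≤ x then (1:ℝ) else 0) - Bx1)/d1 - ((if j < x then (1:ℝ) else 0) - Bx)/d2)
    with hwdef
  -- generic ite-sum helpers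
  have hgen1 : ∀ φ : ℕ → ℝ, ∑ j ∈ Finset.range (k+1), φ j * (if j ≤ x then (1:ℝ) else 0)
      = ∑ j ∈ Finset.range (x+1), φ j := by
    intro φ
    have e1 : ∀ j ∈ Finset.range (k+1), φ j * (if j ≤ x then (1:ℝ) else 0)
        = if j ≤ x then φ j else 0 := by
      intro j _; split <;> ring
    rw [Finset.sum_congr rfl e1, Finset.sum_ite, Finset.sum_const_zero, add_zero]
    apply Finset.sum_congr _ (fun _ _ => rfl)
    ext j
    simp only [Finset.mem_filter, Finset.mem_range]
    omega
  have hgen2 : ∀ φ : ℕ → ℝ, ∑ j ∈ Finset.range (k+1), φ j * (if j < x then (1:ℝ) else 0)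
      = ∑ j ∈ Finset.range x, φ j := by
    intro φ
    have e1 : ∀ j ∈ Finset.range (k+1), φ j * (if j < x then (1:ℝ) else 0)
        = if j < x then φ j else 0 := by
      intro j _; split <;> ring
    rw [Finset.sum_congr rfl e1, Finset.sum_ite, Finset.sum_const_zero, add_zero]
    apply Finset.sum_congr _ (fun _ _ => rfl)
    ext j
    simp only [Finset.mem_filter, Finset.mem_range]
    omega
  -- w sums to zero
  have hwsum : ∑ j ∈ Finset.range (k+1), w j = 0 := by
    have hterm : ∀ j, w j = (bfun k p j * (if j ≤ x then (1:ℝ) else 0))*(1/d1)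
        - bfun k p j * (Bx1/d1)
        - ((bfun k p j * (if j < x then (1:ℝ) else 0))*(1/d2) - bfun k p j * (Bx/d2)) := by
      intro j
      simp only [hwdef]
      ring
    calc ∑ j ∈ Finset.range (k+1), w j
        = ∑ j ∈ Finset.range (k+1), ((bfun k p j * (if j ≤ x then (1:ℝ) else 0))*(1/d1)
          - bfun k p j * (Bx1/d1)
          - ((bfun k p j * (if j < x then (1:ℝ) else 0))*(1/d2) - bfun k p j * (Bx/d2))) :=
          Finset.sum_congr rfl (fun j _ => hterm j)
      _ = (∑ j ∈ Finset.range (k+1), bfun k p j * (if j ≤ x then (1:ℝ) else 0))*(1/d1)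
          - (∑ j ∈ Finset.range (k+1), bfun k p j) * (Bx1/d1)
          - ((∑ j ∈ Finset.range (k+1), bfun k p j * (if j < x then (1:ℝ) else 0))*(1/d2)
            - (∑ j ∈ Finset.range (k+1), bfun k p j) * (Bx/d2)) := by
          rw [Finset.sum_sub_distrib, Finset.sum_sub_distrib, Finset.sum_sub_distrib,
            Finset.sum_mul, Finset.sum_mul, Finset.sum_mul, Finset.sum_mul]
      _ = Bx1*(1/d1) - 1*(Bx1/d1) - (Bx*(1/d2) - 1*(Bx/d2)) := by
          rw [hgen1, hgen2, sum_bfun, ← hBx1def, ← hBxdef]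
      _ = 0 := by ring
  -- value at x
  have hwx : w x = bfun k p x * c := by
    simp only [hwdef]
    rw [if_pos (le_refl x), if_neg (lt_irrefl x)]
    rw [hcdef, ← hTail]
    ring
  have hwxnn : 0 ≤ w x := by
    rw [hwx]; exact mul_nonneg (le_of_lt hbx) hcnn
  -- negativity off the diagonal
  have hwneg : ∀ j ∈ Finset.range (k+1), j ≠ x → w j ≤ 0 := by
    intro j hj hne
    simp only [hwdef]
    rcases lt_or_gt_of_ne hne with hlt | hgt
    · rw [if_pos (le_of_lt hlt), if_pos hlt]
      have hS := S1 k x hx1 hxk p hp hp1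
      have hS' : d2 * Tail ≤ d1 * Tail' := by
        simpa [bfun, hTaildef, hTail'def, hd1def, hd2def] using hS
      have hdiv : (1-Bx1)/d1 - (1-Bx)/d2 ≤ 0 := by
        rw [← hTail, ← hTail']
        rw [sub_nonpos, div_le_div_iff₀ hd1 hd2]
        nlinarith [hS']
      exact mul_nonpos_of_nonneg_of_nonpos (bfun_nonneg k j p hp hp1) hdiv
    · rw [if_neg (by omega), if_neg (by omega)]
      have hS := S2 k x hx1 hxk p hp hp1
      have hS' : d1 * Bx ≤ d2 * Bx1 := by
        simpa [bfun, hBxdef, hBx1def, hd1def, hd2def] using hS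
      have hdiv : ((0:ℝ) - Bx1)/d1 - ((0:ℝ) - Bx)/d2 ≤ 0 := by
        have h1 : ((0:ℝ) - Bx1)/d1 - ((0:ℝ) - Bx)/d2 = Bx/d2 - Bx1/d1 := by ring
        rw [h1, sub_nonpos, div_le_div_iff₀ hd2 hd1]
        nlinarith [hS']
      exact mul_nonpos_of_nonneg_of_nonpos (bfun_nonneg k j p hp hp1) hdiv
  -- representation of the increment
  have hA1 : gfun k p A (x+1) * bfun k p x = Gfun k p A (x+1) / d1 := by
    unfold gfun
    rw [show (((x:ℕ)+1 : ℕ):ℝ) = (x:ℝ)+1 from by push_cast; ring]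
    rw [qb_rel k x (by omega) p, ← hd1def]
    have hbx1 : bfun k p x ≠ 0 := ne_of_gt hbx
    field_simp
  have hA2 : gfun k p A x * bfun k p x = Gfun k p A x / d2 := by
    unfold gfun
    rw [hd2def]
    have hbx1 : bfun k p x ≠ 0 := ne_of_gt hbx
    field_simp
  -- increment representation
  have hW1 : Gfun k p A (x+1) = (∑ j ∈ Finset.range (x+1), bfun k p j * hfun A j) - Wc k p A * Bx1 := by
    unfold Gfun
    simp only [mul_sub]
    rw [Finset.sum_sub_distrib, ← Finset.sum_mul, ← hBx1def]
    ring
  have hW2 : Gfun k p A x = (∑ j ∈ Finset.range x, bfun k p j * hfun A j) - Wc k p A * Bx := by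
    unfold Gfun
    simp only [mul_sub]
    rw [Finset.sum_sub_distrib, ← Finset.sum_mul, ← hBxdef]
    ring
  have hDw : (gfun k p A (x+1) - gfun k p A x) * bfun k p x
      = ∑ j ∈ Finset.range (k+1), hfun A j * w j := by
    have hterm2 : ∀ j, hfun A j * w j
        = ((bfun k p j * hfun A j) * (if j ≤ x then (1:ℝ) else 0))*(1/d1)
          - (bfun k p j * hfun A j)*(Bx1/d1)
          - (((bfun k p j * hfun A j) * (if j < x then (1:ℝ) else 0))*(1/d2)
            - (bfun k p j * hfun A j)*(Bx/d2)) := by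
      intro j
      simp only [hwdef]
      ring
    have hR : ∑ j ∈ Finset.range (k+1), hfun A j * w j
        = (∑ j ∈ Finset.range (x+1), bfun k p j * hfun A j)*(1/d1)
          - Wc k p A * (Bx1/d1)
          - ((∑ j ∈ Finset.range x, bfun k p j * hfun A j)*(1/d2)
            - Wc k p A * (Bx/d2)) := by
      calc ∑ j ∈ Finset.range (k+1), hfun A j * w j
          = ∑ j ∈ Finset.range (k+1), (((bfun k p j * hfun A j) * (if j ≤ x then (1:ℝ) else 0))*(1/d1)
            - (bfun k p j * hfun A j)*(Bx1/d1)
            - (((bfun k p j * hfun A j) * (if j < x then (1:ℝ) else 0))*(1/d2)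
              - (bfun k p j * hfun A j)*(Bx/d2))) :=
            Finset.sum_congr rfl (fun j _ => hterm2 j)
        _ = (∑ j ∈ Finset.range (k+1), (bfun k p j * hfun A j) * (if j ≤ x then (1:ℝ) else 0))*(1/d1)
            - (∑ j ∈ Finset.range (k+1), bfun k p j * hfun A j) * (Bx1/d1)
            - ((∑ j ∈ Finset.range (k+1), (bfun k p j * hfun A j) * (if j < x then (1:ℝ) else 0))*(1/d2)
              - (∑ j ∈ Finset.range (k+1), bfun k p j * hfun A j) * (Bx/d2)) := by
            rw [Finset.sum_sub_distrib, Finset.sum_sub_distrib, Finset.sum_sub_distrib,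
              Finset.sum_mul, Finset.sum_mul, Finset.sum_mul, Finset.sum_mul]
        _ = _ := by
            rw [hgen1 (fun j => bfun k p j * hfun A j), hgen2 (fun j => bfun k p j * hfun A j)]
            rfl
    rw [hR, sub_mul, hA1, hA2, hW1, hW2]
    field_simp
  -- upper and lower estimates
  have hupper : ∑ j ∈ Finset.range (k+1), hfun A j * w j ≤ w x := by
    have hterm : ∀ j ∈ Finset.range (k+1), hfun A j * w j ≤ (if j = x then w x else 0) := by
      intro j hj
      by_cases hjx : j = x
      · subst hjx
        rw [if_pos rfl]
        have h5 := mul_le_mul_of_nonneg_right (h01 A j).2 hwxnn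
        linarith
      · rw [if_neg hjx]
        exact mul_nonpos_of_nonneg_of_nonpos (h01 A j).1 (hwneg j hj hjx)
    calc ∑ j ∈ Finset.range (k+1), hfun A j * w j
        ≤ ∑ j ∈ Finset.range (k+1), (if j = x then w x else 0) := Finset.sum_le_sum hterm
      _ = w x := by
          rw [Finset.sum_ite_eq' (Finset.range (k+1)) x (fun _ => w x)]
          rw [if_pos (by simp only [Finset.mem_range]; omega)]
  have hlower : -(w x) ≤ ∑ j ∈ Finset.range (k+1), hfun A j * w j := by
    have hterm : ∀ j ∈ Finset.range (k+1), (if j = x then (0:ℝ) else w j) ≤ hfun A j * w j := by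
      intro j hj
      by_cases hjx : j = x
      · subst hjx
        rw [if_pos rfl]
        exact mul_nonneg (h01 A j).1 hwxnn
      · rw [if_neg hjx]
        have h1 : hfun A j ≤ 1 := (h01 A j).2
        have h2 : w j ≤ 0 := hwneg j hj hjx
        have h5 := mul_le_mul_of_nonpos_right h1 h2
        linarith
    have hsum2 : ∑ j ∈ Finset.range (k+1), (if j = x then (0:ℝ) else w j) = -(w x) := by
      have hsplit : ∀ j, (if j = x then (0:ℝ) else w j) = w j - (if j = x then w j else 0) := by
        intro j; split <;> ring
      rw [Finset.sum_congr rfl (fun j _ => hsplit j), Finset.sum_sub_distrib, hwsum,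
        Finset.sum_ite_eq' (Finset.range (k+1)) x w]
      rw [if_pos (by simp only [Finset.mem_range]; omega)]
      ring
    calc -(w x) = ∑ j ∈ Finset.range (k+1), (if j = x then (0:ℝ) else w j) := hsum2.symm
      _ ≤ _ := Finset.sum_le_sum hterm
  -- conclusion
  have habs : |gfun k p A (x+1) - gfun k p A x| * bfun k p x ≤ bfun k p x * c := by
    rw [← abs_of_pos hbx, ← abs_mul]
    rw [abs_of_pos hbx]
    have h3 : |(gfun k p A (x+1) - gfun k p A x) * bfun k p x| ≤ w x := by
      rw [abs_le]
      constructor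
      · rw [hDw]; exact hlower
      · rw [hDw]; exact hupper
    rw [hwx] at h3
    exact h3
  have hfin : |gfun k p A (x+1) - gfun k p A x| ≤ c := by
    have h4 : |gfun k p A (x+1) - gfun k p A x| * bfun k p x ≤ c * bfun k p x := by
      rw [mul_comm c]; exact habs
    exact le_of_mul_le_mul_right h4 hbx
  exact le_trans hfin hc

theorem stmt11 (n m k : ℕ) (hm : m ≤ n) (hk : k ≤ n)
    (hvar : 1 ≤ (k : ℝ) * ((m : ℝ) / n) * (1 - (m : ℝ) / n)) :
    ∀ A : Finset ℕ,
      |∑ i ∈ A,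
          ((if i ≤ k then ((m.choose i : ℝ) * ((n - m).choose (k - i) : ℝ)) / (n.choose k : ℝ)
            else 0)
          - (k.choose i : ℝ) * ((m : ℝ) / n) ^ i * (1 - (m : ℝ) / n) ^ (k - i))|
        ≤ ((k : ℝ) - 1) / ((n : ℝ) - 1) := by
  intro A
  -- nondegeneracy
  have hn0 : 0 < n := by
    rcases Nat.eq_zero_or_pos n with rfl | h
    · simp at hvar; linarith
    · exact h
  set p : ℝ := (m:ℝ)/n with hpdef
  have hnR : (0:ℝ) < n := by exact_mod_cast hn0
  have hprnn : 0 ≤ p := by positivity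
  have hple : p ≤ 1 := by
    rw [hpdef, div_le_one hnR]
    exact_mod_cast hm
  have hp : 0 < p := by
    rcases eq_or_lt_of_le hprnn with h | h
    · exfalso; rw [← h] at hvar; simp at hvar; linarith
    · exact h
  have hp1 : p < 1 := by
    rcases eq_or_lt_of_le hple with h | h
    · exfalso; rw [h] at hvar; simp at hvar; linarith
    · exact h
  have hm0 : 0 < m := by
    by_contra h
    have : m = 0 := by omega
    rw [this] at hpdef
    simp at hpdef
    rw [hpdef] at hp
    exact lt_irrefl 0 hp
  have hmn : m < n := by
    by_contra h
    have : m = n := by omega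
    rw [this] at hpdef
    rw [div_self (ne_of_gt hnR)] at hpdef
    rw [hpdef] at hp1
    exact lt_irrefl 1 hp1
  have hk2 : 2 ≤ k := by
    by_contra h
    have hk1 : k ≤ 1 := by omega
    have hkR : (k:ℝ) ≤ 1 := by exact_mod_cast hk1
    have hpq4 : p*(1-p) ≤ 1/4 := by nlinarith [sq_nonneg (p - 1/2)]
    nlinarith [hvar, mul_pos hp (by linarith : (0:ℝ) < 1-p)]
  have hq : (0:ℝ) < 1-p := by linarith
  -- reduction to the weighted sum
  have hsum1 : ∑ i ∈ Finset.range (k+1), hypf n m k i = 1 := by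
    unfold hypf; exact hyp_sum_one n m k hm hk
  have hred : ∑ i ∈ A,
      ((if i ≤ k then ((m.choose i : ℝ) * ((n - m).choose (k - i) : ℝ)) / (n.choose k : ℝ)
        else 0)
      - (k.choose i : ℝ) * ((m : ℝ) / n) ^ i * (1 - (m : ℝ) / n) ^ (k - i))
      = ∑ i ∈ Finset.range (k+1), hypf n m k i * (hfun A i - Wc k p A) := by
    have step1 : ∑ i ∈ A,
        ((if i ≤ k then ((m.choose i : ℝ) * ((n - m).choose (k - i) : ℝ)) / (n.choose k : ℝ)
          else 0)
        - (k.choose i : ℝ) * p ^ i * (1 - p) ^ (k - i))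
        = ∑ i ∈ A ∩ Finset.range (k+1),
        ((if i ≤ k then ((m.choose i : ℝ) * ((n - m).choose (k - i) : ℝ)) / (n.choose k : ℝ)
          else 0)
        - (k.choose i : ℝ) * p ^ i * (1 - p) ^ (k - i)) := by
      symm
      apply Finset.sum_subset Finset.inter_subset_left
      intro i hiA hni
      have hik : k < i := by
        simp only [Finset.mem_inter, Finset.mem_range] at hni
        by_contra hcon
        exact hni ⟨hiA, by omega⟩
      rw [if_neg (by omega), Nat.choose_eq_zero_of_lt hik]
      simp
    have step2 : ∑ i ∈ A ∩ Finset.range (k+1),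
        ((if i ≤ k then ((m.choose i : ℝ) * ((n - m).choose (k - i) : ℝ)) / (n.choose k : ℝ)
          else 0)
        - (k.choose i : ℝ) * p ^ i * (1 - p) ^ (k - i))
        = ∑ i ∈ Finset.range (k+1), hfun A i *
          ((if i ≤ k then ((m.choose i : ℝ) * ((n - m).choose (k - i) : ℝ)) / (n.choose k : ℝ)
            else 0)
          - (k.choose i : ℝ) * p ^ i * (1 - p) ^ (k - i)) := by
      rw [Finset.inter_comm]
      rw [← Finset.sum_ite_mem]
      apply Finset.sum_congr rfl
      intro i _
      unfold hfun
      split <;> ring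
    have step3 : ∀ i ∈ Finset.range (k+1), hfun A i *
        ((if i ≤ k then ((m.choose i : ℝ) * ((n - m).choose (k - i) : ℝ)) / (n.choose k : ℝ)
          else 0)
        - (k.choose i : ℝ) * p ^ i * (1 - p) ^ (k - i))
        = hypf n m k i * hfun A i - bfun k p i * hfun A i := by
      intro i hi
      simp only [Finset.mem_range] at hi
      rw [if_pos (by omega : i ≤ k)]
      unfold hypf bfun
      ring
    rw [step1, step2, Finset.sum_congr rfl step3, Finset.sum_sub_distrib]
    have step4 : ∑ i ∈ Finset.range (k+1), (hypf n m k i * (hfun A i - Wc k p A))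
        = ∑ i ∈ Finset.range (k+1), hypf n m k i * hfun A i - Wc k p A := by
      simp only [mul_sub]
      rw [Finset.sum_sub_distrib, ← Finset.sum_mul, hsum1, one_mul]
    rw [step4]
    unfold Wc
    ring
  rw [hred]
  -- the Stein identity
  set g : ℕ → ℝ := gfun k p A with hgdef
  have hC : (0:ℝ) < (n.choose k : ℝ) := by exact_mod_cast Nat.choose_pos hk
  have hnp : (n:ℝ)*p = m := by rw [hpdef]; field_simp
  have hnq : (n:ℝ)*(1-p) = (n:ℝ)-m := by rw [hpdef]; field_simp
  -- E1 : exchange identity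
  have hE1 : ∑ i ∈ Finset.range (k+1), hypf n m k i * (((m:ℝ)-i)*((k:ℝ)-i)) * g (i+1)
      = ∑ i ∈ Finset.range (k+1), hypf n m k i * ((i:ℝ)*((n:ℝ)-m-k+i)) * g i := by
    rw [Finset.sum_range_succ, Finset.sum_range_succ']
    have hlast : hypf n m k k * (((m:ℝ)-k)*((k:ℝ)-k)) * g (k+1) = 0 := by
      rw [sub_self]; ring
    have hfirst : hypf n m k 0 * (((0:ℕ):ℝ)*((n:ℝ)-m-k+(0:ℕ))) * g 0 = 0 := by
      norm_num
    rw [hlast, hfirst, add_zero, add_zero]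
    apply Finset.sum_congr rfl
    intro j hj
    simp only [Finset.mem_range] at hj
    have hr := hyp_rec n m k j hm hj hk
    have hr' : ((m:ℝ)-j)*((k:ℝ)-j)*hypf n m k j
        = ((j:ℝ)+1)*((n:ℝ)-m-k+j+1)*hypf n m k (j+1) := by
      unfold hypf
      rw [show k-(j+1) = k-j-1 from by omega]
      field_simp
      linear_combination hr
    push_cast
    linear_combination (g (j+1)) * hr'
  have hiden : (n:ℝ) * ∑ i ∈ Finset.range (k+1), hypf n m k i * (hfun A i - Wc k p A)
      = ∑ i ∈ Finset.range (k+1), hypf n m k i * ((i:ℝ)*((k:ℝ)-i)) * (g (i+1) - g i) := by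
    have hterm : ∀ i ∈ Finset.range (k+1), hypf n m k i * (hfun A i - Wc k p A) * (n:ℝ)
        = (hypf n m k i * (((m:ℝ)-i)*((k:ℝ)-i)) * g (i+1)
            + hypf n m k i * ((i:ℝ)*((k:ℝ)-i)) * g (i+1))
          - (hypf n m k i * ((i:ℝ)*((n:ℝ)-m-k+i)) * g i
            + hypf n m k i * ((i:ℝ)*((k:ℝ)-i)) * g i) := by
      intro i hi
      simp only [Finset.mem_range] at hi
      rw [stein_eq k p hp hp1 A i (by omega), hgdef]
      linear_combination (hypf n m k i * ((k:ℝ)-(i:ℝ)) * gfun k p A (i+1)) * hnp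
        - (hypf n m k i * (i:ℝ) * gfun k p A i) * hnq
    calc (n:ℝ) * ∑ i ∈ Finset.range (k+1), hypf n m k i * (hfun A i - Wc k p A)
        = ∑ i ∈ Finset.range (k+1), hypf n m k i * (hfun A i - Wc k p A) * (n:ℝ) := by
          rw [Finset.mul_sum]
          exact Finset.sum_congr rfl (fun i _ => mul_comm _ _)
      _ = ∑ i ∈ Finset.range (k+1),
          ((hypf n m k i * (((m:ℝ)-i)*((k:ℝ)-i)) * g (i+1)
            + hypf n m k i * ((i:ℝ)*((k:ℝ)-i)) * g (i+1))
          - (hypf n m k i * ((i:ℝ)*((n:ℝ)-m-k+i)) * g i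
            + hypf n m k i * ((i:ℝ)*((k:ℝ)-i)) * g i)) := Finset.sum_congr rfl hterm
      _ = (∑ i ∈ Finset.range (k+1), hypf n m k i * (((m:ℝ)-i)*((k:ℝ)-i)) * g (i+1)
            + ∑ i ∈ Finset.range (k+1), hypf n m k i * ((i:ℝ)*((k:ℝ)-i)) * g (i+1))
          - (∑ i ∈ Finset.range (k+1), hypf n m k i * ((i:ℝ)*((n:ℝ)-m-k+i)) * g i
            + ∑ i ∈ Finset.range (k+1), hypf n m k i * ((i:ℝ)*((k:ℝ)-i)) * g i) := by
          rw [Finset.sum_sub_distrib, Finset.sum_add_distrib, Finset.sum_add_distrib]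
      _ = ∑ i ∈ Finset.range (k+1), hypf n m k i * ((i:ℝ)*((k:ℝ)-i)) * g (i+1)
          - ∑ i ∈ Finset.range (k+1), hypf n m k i * ((i:ℝ)*((k:ℝ)-i)) * g i := by
          rw [hE1]; ring
      _ = _ := by
          rw [← Finset.sum_sub_distrib]
          apply Finset.sum_congr rfl
          intro i _
          ring
  -- bounding
  set c0 : ℝ := 1/(((k:ℝ)+1)*(p*(1-p))) with hc0def
  have hc0nn : 0 ≤ c0 := by positivity
  have hhypnn : ∀ i, 0 ≤ hypf n m k i := by
    intro i
    unfold hypf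
    positivity
  have habs : |∑ i ∈ Finset.range (k+1), hypf n m k i * ((i:ℝ)*((k:ℝ)-i)) * (g (i+1) - g i)|
      ≤ (∑ i ∈ Finset.range (k+1), ((i:ℝ)*((k:ℝ)-i)) * hypf n m k i) * c0 := by
    calc |∑ i ∈ Finset.range (k+1), hypf n m k i * ((i:ℝ)*((k:ℝ)-i)) * (g (i+1) - g i)|
        ≤ ∑ i ∈ Finset.range (k+1), |hypf n m k i * ((i:ℝ)*((k:ℝ)-i)) * (g (i+1) - g i)| :=
          Finset.abs_sum_le_sum_abs _ _
      _ ≤ ∑ i ∈ Finset.range (k+1), ((i:ℝ)*((k:ℝ)-i)) * hypf n m k i * c0 := by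
          apply Finset.sum_le_sum
          intro i hi
          simp only [Finset.mem_range] at hi
          have hik : i ≤ k := by omega
          have hcoefnn : 0 ≤ (i:ℝ)*((k:ℝ)-i) := by
            have h1 : (i:ℝ) ≤ (k:ℝ) := by exact_mod_cast hik
            have h2 : (0:ℝ) ≤ (i:ℝ) := by positivity
            nlinarith
          rcases Nat.eq_zero_or_pos i with rfl | hi1
          · norm_num
          rcases eq_or_lt_of_le hik with rfl | hik2
          · rw [sub_self]
            norm_num
          have hdg := dg_bound k i hi1 (by omega) p hp hp1 A
          rw [abs_mul, abs_mul, abs_of_nonneg (hhypnn i), abs_of_nonneg hcoefnn]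
          calc hypf n m k i * ((i:ℝ)*((k:ℝ)-i)) * |g (i+1) - g i|
              ≤ hypf n m k i * ((i:ℝ)*((k:ℝ)-i)) * c0 := by
                apply mul_le_mul_of_nonneg_left _ (mul_nonneg (hhypnn i) hcoefnn)
                rw [hgdef, hc0def]
                exact hdg
            _ = ((i:ℝ)*((k:ℝ)-i)) * hypf n m k i * c0 := by ring
      _ = (∑ i ∈ Finset.range (k+1), ((i:ℝ)*((k:ℝ)-i)) * hypf n m k i) * c0 := by
          rw [Finset.sum_mul]
  have hmom : ∑ i ∈ Finset.range (k+1), ((i:ℝ)*((k:ℝ)-i)) * hypf n m k i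
      = (k:ℝ)*((k:ℝ)-1)*(m:ℝ)*((n:ℝ)-m)/((n:ℝ)*((n:ℝ)-1)) := by
    unfold hypf
    exact moment_real n m k (by omega) hmn hk
  rw [hmom] at habs
  -- final numeric computation
  have hn1 : (0:ℝ) < (n:ℝ)-1 := by
    have : (2:ℝ) ≤ (n:ℝ) := by exact_mod_cast (by omega : 2 ≤ n)
    linarith
  have hkR2 : (2:ℝ) ≤ (k:ℝ) := by exact_mod_cast hk2
  have hmR : (0:ℝ) < (m:ℝ) := by exact_mod_cast hm0
  have hnmR : (0:ℝ) < (n:ℝ)-m := by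
    have : (m:ℝ) < (n:ℝ) := by exact_mod_cast hmn
    linarith
  have hpq : p*(1-p) = (m:ℝ)*((n:ℝ)-m)/((n:ℝ)^2) := by
    rw [hpdef]
    field_simp
  have hMc0 : ((k:ℝ)*((k:ℝ)-1)*(m:ℝ)*((n:ℝ)-m)/((n:ℝ)*((n:ℝ)-1))) * c0
      = (k:ℝ)*((k:ℝ)-1)*(n:ℝ)/(((k:ℝ)+1)*((n:ℝ)-1)) := by
    rw [hc0def, hpq]
    field_simp
  rw [hMc0] at habs
  -- |X| * n = |S| ≤ bound
  have hXabs : (n:ℝ) * |∑ i ∈ Finset.range (k+1), hypf n m k i * (hfun A i - Wc k p A)|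
      ≤ (k:ℝ)*((k:ℝ)-1)*(n:ℝ)/(((k:ℝ)+1)*((n:ℝ)-1)) := by
    rw [← abs_of_pos hnR, ← abs_mul, hiden]
    rwa [abs_of_pos hnR]
  have h9 : (k:ℝ)*((k:ℝ)-1)*(n:ℝ)/(((k:ℝ)+1)*((n:ℝ)-1)) ≤ (n:ℝ)*(((k:ℝ)-1)/((n:ℝ)-1)) := by
    rw [show (n:ℝ)*(((k:ℝ)-1)/((n:ℝ)-1)) = (n:ℝ)*((k:ℝ)-1)/((n:ℝ)-1) from by ring]
    rw [div_le_div_iff₀ (by positivity) hn1]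
    have key : (n:ℝ)*((k:ℝ)-1)*(((k:ℝ)+1)*((n:ℝ)-1)) - (k:ℝ)*((k:ℝ)-1)*(n:ℝ)*((n:ℝ)-1)
        = (n:ℝ)*((k:ℝ)-1)*((n:ℝ)-1) := by ring
    have hnn : 0 ≤ (n:ℝ)*((k:ℝ)-1)*((n:ℝ)-1) :=
      mul_nonneg (mul_nonneg hnR.le (by linarith : (0:ℝ) ≤ (k:ℝ)-1)) hn1.le
    linarith [key, hnn]
  have h10 : (n:ℝ) * |∑ i ∈ Finset.range (k+1), hypf n m k i * (hfun A i - Wc k p A)|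
      ≤ (n:ℝ)*(((k:ℝ)-1)/((n:ℝ)-1)) := le_trans hXabs h9
  exact le_of_mul_le_mul_left h10 hnR
end

section
/- Let T : ℕ → ℕ satisfy T(0) = 0 and suppose there are constants c > 0 and 0 < a < 1 such that for every n > 0 there exists an integer κ with 1 ≤ κ ≤ n^{1−a}/c and T(n) ≤ κ + T(max(0, n − ⌈c·κ·n^a⌉)). Then T(n) = O(n^{1−a}). -/
-- The round-complexity recurrence: if `T 0 = 0` and for every `n > 0` there is an
-- integer `κ` with `1 ≤ κ ≤ n^{1-a}/c` and `T n ≤ κ + T (n - ⌈c·κ·n^a⌉)`, then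
-- `T(n) = O(n^{1-a})`.
theorem stmt13 (T : ℕ → ℕ) (hT0 : T 0 = 0) (c : ℝ) (hc : 0 < c) (a : ℝ)
    (ha0 : 0 < a) (ha1 : a < 1)
    (hrec : ∀ n : ℕ, 0 < n → ∃ κ : ℕ, 1 ≤ κ ∧ (κ : ℝ) ≤ (n : ℝ) ^ (1 - a) / c ∧
      T n ≤ κ + T (n - ⌈c * (κ : ℝ) * (n : ℝ) ^ a⌉₊)) :
    ∃ C : ℝ, ∀ n : ℕ, (T n : ℝ) ≤ C * (n : ℝ) ^ (1 - a) := by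
  have h1a : 0 < 1 - a := by linarith
  refine ⟨1 / (c * (1 - a)), fun n => ?_⟩
  induction n using Nat.strong_induction_on with
  | _ n ih =>
    rcases Nat.eq_zero_or_pos n with rfl | hn
    · simp [hT0, Real.zero_rpow (ne_of_gt h1a)]
    obtain ⟨κ, hκ1, hκ2, hκ3⟩ := hrec n hn
    set k := ⌈c * (κ : ℝ) * (n : ℝ) ^ a⌉₊ with hk
    have hnpos : (0 : ℝ) < n := Nat.cast_pos.mpr hn
    have hna : (0 : ℝ) < (n : ℝ) ^ a := Real.rpow_pos_of_pos hnpos a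
    have hκpos : (0 : ℝ) < κ := by exact_mod_cast hκ1
    have hkpos : 0 < k := Nat.ceil_pos.mpr (by positivity)
    have hlt : n - k < n := Nat.sub_lt hn hkpos
    have ihm := ih (n - k) hlt
    have hn1a : (0 : ℝ) < (n : ℝ) ^ (1 - a) := Real.rpow_pos_of_pos hnpos _
    have hCge : (n : ℝ) ^ (1 - a) / c ≤ 1 / (c * (1 - a)) * (n : ℝ) ^ (1 - a) := by
      rw [div_eq_mul_one_div, mul_comm]
      gcongr
      nlinarith
    rcases Nat.eq_zero_or_pos (n - k) with h0 | hmpos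
    · rw [h0] at hκ3
      calc (T n : ℝ) ≤ (κ : ℝ) + T 0 := by exact_mod_cast hκ3
        _ = κ := by simp [hT0]
        _ ≤ (n : ℝ) ^ (1 - a) / c := hκ2
        _ ≤ 1 / (c * (1 - a)) * (n : ℝ) ^ (1 - a) := hCge
    · have hkn : k ≤ n := le_of_lt (Nat.lt_of_sub_pos hmpos)
      have hcast : ((n - k : ℕ) : ℝ) = (n : ℝ) - (k : ℝ) := by
        push_cast [Nat.cast_sub hkn]; ring
      set m : ℝ := ((n - k : ℕ) : ℝ) with hmdef
      have hm0 : (0 : ℝ) ≤ m := Nat.cast_nonneg _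
      have hceil : c * (κ : ℝ) * (n : ℝ) ^ a ≤ (k : ℝ) := Nat.le_ceil _
      -- weighted AM-GM: m^(1-a) * n^a ≤ (1-a)*m + a*n
      have hamgm : m ^ (1 - a) * (n : ℝ) ^ a ≤ (1 - a) * m + a * n :=
        Real.geom_mean_le_arith_mean2_weighted h1a.le ha0.le hm0 hnpos.le (by ring)
      have hnn : (n : ℝ) ^ (1 - a) * (n : ℝ) ^ a = (n : ℝ) := by
        rw [← Real.rpow_add hnpos]; simp
      -- key: κ ≤ (1/(c*(1-a))) * (n^(1-a) - m^(1-a))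
      have hkey : (κ : ℝ) * (c * (1 - a)) * (n : ℝ) ^ a
          ≤ ((n : ℝ) ^ (1 - a) - m ^ (1 - a)) * (n : ℝ) ^ a := by
        have h1 : c * (κ : ℝ) * (n : ℝ) ^ a ≤ (n : ℝ) - m := by
          rw [hcast]; linarith
        nlinarith
      have hkey2 : (κ : ℝ) ≤ 1 / (c * (1 - a)) * ((n : ℝ) ^ (1 - a) - m ^ (1 - a)) := by
        have h2 := le_of_mul_le_mul_right hkey hna
        rw [one_div, mul_comm, ← div_eq_mul_inv, le_div_iff₀ (by positivity)]
        linarith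
      calc (T n : ℝ) ≤ (κ : ℝ) + T (n - k) := by exact_mod_cast hκ3
        _ ≤ (κ : ℝ) + 1 / (c * (1 - a)) * m ^ (1 - a) := by linarith [ihm]
        _ ≤ 1 / (c * (1 - a)) * (n : ℝ) ^ (1 - a) := by
            have := hkey2; nlinarith [Real.rpow_nonneg hm0 (1 - a)]
end
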